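/- arXiv:1309.3249 — 5 statements merged into one kernel-verified Lean document; each statement's English description precedes it below -/
import Mathlib

section
/- For all positive reals a and b, ∫₀^∞ w^{-1/2} exp(-(a/2)w - b/(2w)) dw = sqrt(2π/a) · exp(-sqrt(a·b)). -/
open MeasureTheory Real Set

lemma psi_hasDeriv (α β s : ℝ) (hs : s ≠ 0) :
    HasDerivAt (fun s : ℝ => α * s - β / s) (α + β / s ^ 2) s := by
  have h1 : HasDerivAt (fun s : ℝ => α * s) (α * 1) s := (hasDerivAt_id s).const_mul α
  have h2 : HasDerivAt (fun s : ℝ => β * s⁻¹) (β * (-(s ^ 2)⁻¹)) s :=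
    (hasDerivAt_inv hs).const_mul β
  have h := h1.sub h2
  have heq : α * 1 - β * (-(s ^ 2)⁻¹) = α + β / s ^ 2 := by field_simp; ring
  rw [heq] at h
  have hf : (fun s : ℝ => α * s - β / s) = (fun s => α * s) - fun s => β * s⁻¹ := by
    ext x
    simp [div_eq_mul_inv]
  rw [hf]
  exact h

lemma psi_injOn (α β : ℝ) (hα : 0 < α) (hβ : 0 < β) :
    InjOn (fun s : ℝ => α * s - β / s) (Ioi 0) := by
  have : StrictMonoOn (fun s : ℝ => α * s - β / s) (Ioi 0) := by
    intro x hx y hy hxy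
    simp only [mem_Ioi] at hx hy
    have h1 : α * x < α * y := by nlinarith
    have h2 : β / y < β / x := div_lt_div_of_pos_left hβ hx hxy
    simp only
    linarith
  exact this.injOn

lemma psi_image (α β : ℝ) (hα : 0 < α) (hβ : 0 < β) :
    (fun s : ℝ => α * s - β / s) '' Ioi 0 = univ := by
  ext y
  simp only [mem_image, mem_univ, iff_true, mem_Ioi]
  set r := Real.sqrt (y ^ 2 + 4 * α * β) with hr
  have hr2 : r ^ 2 = y ^ 2 + 4 * α * β := Real.sq_sqrt (by positivity)
  have hry : -y < r := by
    nlinarith [Real.sqrt_nonneg (y ^ 2 + 4 * α * β), hr2]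
  have hyr : 0 < y + r := by linarith
  set s := (y + r) / (2 * α) with hsdef
  have hs : 0 < s := div_pos hyr (by positivity)
  have hkey : α * s ^ 2 = y * s + β := by
    rw [hsdef]; field_simp; nlinarith [hr2]
  refine ⟨s, hs, ?_⟩
  field_simp
  nlinarith [hkey]

lemma glasser_full (α β : ℝ) (hα : 0 < α) (hβ : 0 < β) :
    ∫ s in Ioi (0:ℝ), (α + β / s ^ 2) * Real.exp (-(α * s - β / s) ^ 2)
      = Real.sqrt Real.pi := by
  have hderiv : ∀ s ∈ Ioi (0:ℝ), HasDerivWithinAt (fun s : ℝ => α * s - β / s)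
      (α + β / s ^ 2) (Ioi 0) s :=
    fun s hs => (psi_hasDeriv α β s (ne_of_gt hs)).hasDerivWithinAt
  have h := integral_image_eq_integral_abs_deriv_smul measurableSet_Ioi hderiv
    (psi_injOn α β hα hβ) (fun x => Real.exp (-x ^ 2))
  rw [psi_image α β hα hβ] at h
  rw [Measure.restrict_univ] at h
  have hg : (∫ x : ℝ, Real.exp (-x ^ 2)) = Real.sqrt Real.pi := by
    have := integral_gaussian 1
    simpa using this
  rw [hg] at h
  rw [h]
  apply setIntegral_congr_fun measurableSet_Ioi
  intro s hs
  simp only [mem_Ioi] at hs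
  have : |α + β / s ^ 2| = α + β / s ^ 2 := abs_of_pos (by positivity)
  simp [this, smul_eq_mul]

lemma glasser_full_integrable (α β : ℝ) (hα : 0 < α) (hβ : 0 < β) :
    IntegrableOn (fun s => (α + β / s ^ 2) * Real.exp (-(α * s - β / s) ^ 2))
      (Ioi (0:ℝ)) := by
  have hderiv : ∀ s ∈ Ioi (0:ℝ), HasDerivWithinAt (fun s : ℝ => α * s - β / s)
      (α + β / s ^ 2) (Ioi 0) s :=
    fun s hs => (psi_hasDeriv α β s (ne_of_gt hs)).hasDerivWithinAt
  have h := (integrableOn_image_iff_integrableOn_abs_deriv_smul measurableSet_Ioi hderiv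
    (psi_injOn α β hα hβ) (fun x => Real.exp (-x ^ 2)))
  rw [psi_image α β hα hβ] at h
  have hint : IntegrableOn (fun x => Real.exp (-x ^ 2)) univ := by
    rw [integrableOn_univ]
    have := integrable_exp_neg_mul_sq (one_pos (α := ℝ))
    simpa using this
  have h2 := h.mp hint
  apply h2.congr_fun ?_ measurableSet_Ioi
  intro s hs
  simp only [mem_Ioi] at hs
  have : |α + β / s ^ 2| = α + β / s ^ 2 := abs_of_pos (by positivity)
  simp [this, smul_eq_mul]

lemma glasser_I_integrable (α β : ℝ) (hα : 0 < α) (hβ : 0 < β) :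
    IntegrableOn (fun s => Real.exp (-(α * s - β / s) ^ 2)) (Ioi (0:ℝ)) := by
  apply Integrable.mono' ((glasser_full_integrable α β hα hβ).const_mul α⁻¹)
  · apply Measurable.aestronglyMeasurable
    fun_prop
  · filter_upwards [ae_restrict_mem measurableSet_Ioi] with s hs
    simp only [mem_Ioi] at hs
    rw [Real.norm_eq_abs, abs_of_pos (Real.exp_pos _)]
    have h1 : 0 < Real.exp (-(α * s - β / s) ^ 2) := Real.exp_pos _
    have h2 : (0:ℝ) < β / s ^ 2 := by positivity
    rw [show α⁻¹ * ((α + β / s ^ 2) * Real.exp (-(α * s - β / s) ^ 2))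
        = (1 + α⁻¹ * (β / s ^ 2)) * Real.exp (-(α * s - β / s) ^ 2) by
      field_simp]
    nlinarith [mul_pos (mul_pos (inv_pos.mpr hα) h2) h1]

lemma glasser_refl (α β : ℝ) (hα : 0 < α) (hβ : 0 < β) :
    ∫ t in Ioi (0:ℝ), Real.exp (-(α * t - β / t) ^ 2)
      = ∫ s in Ioi (0:ℝ), (β / (α * s ^ 2)) * Real.exp (-(α * s - β / s) ^ 2) := by
  have hderiv : ∀ s ∈ Ioi (0:ℝ), HasDerivWithinAt (fun s : ℝ => β / α * s⁻¹)
      (β / α * (-(s ^ 2)⁻¹)) (Ioi 0) s :=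
    fun s hs => (((hasDerivAt_inv (ne_of_gt hs)).const_mul (β / α))).hasDerivWithinAt
  have hinj : InjOn (fun s : ℝ => β / α * s⁻¹) (Ioi 0) := by
    have : StrictAntiOn (fun s : ℝ => β / α * s⁻¹) (Ioi 0) := by
      intro x hx y hy hxy
      simp only [mem_Ioi] at hx hy
      simp only
      rw [mul_comm, mul_comm (β / α)]
      apply mul_lt_mul_of_pos_right _ (by positivity)
      exact inv_strictAnti₀ hx hxy
    exact this.injOn
  have himg : (fun s : ℝ => β / α * s⁻¹) '' Ioi 0 = Ioi 0 := by
    ext y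
    simp only [mem_image, mem_Ioi]
    constructor
    · rintro ⟨s, hs, rfl⟩; positivity
    · intro hy
      refine ⟨β / α * y⁻¹, by positivity, ?_⟩
      field_simp
  have h := integral_image_eq_integral_abs_deriv_smul measurableSet_Ioi hderiv hinj
    (fun t => Real.exp (-(α * t - β / t) ^ 2))
  rw [himg] at h
  rw [h]
  apply setIntegral_congr_fun measurableSet_Ioi
  intro s hs
  simp only [mem_Ioi] at hs
  have e1 : α * (β / α * s⁻¹) = β / s := by field_simp
  have e2 : β / (β / α * s⁻¹) = α * s := by field_simp
  have e3 : |β / α * (-(s ^ 2)⁻¹)| = β / (α * s ^ 2) := by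
    rw [mul_neg, abs_neg, abs_of_pos (by positivity)]
    field_simp
  simp only [smul_eq_mul, e1, e2]
  rw [e3]
  congr 2
  ring

lemma glasser_half (α β : ℝ) (hα : 0 < α) (hβ : 0 < β) :
    ∫ s in Ioi (0:ℝ), Real.exp (-(α * s - β / s) ^ 2)
      = Real.sqrt Real.pi / (2 * α) := by
  have hIntI := glasser_I_integrable α β hα hβ
  have hf1 : IntegrableOn (fun s => α * Real.exp (-(α * s - β / s) ^ 2)) (Ioi 0) :=
    hIntI.const_mul α
  have hf2 : IntegrableOn (fun s => (β / s ^ 2) * Real.exp (-(α * s - β / s) ^ 2)) (Ioi 0) := by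
    have h := (glasser_full_integrable α β hα hβ).sub hf1
    apply IntegrableOn.congr_fun h ?_ measurableSet_Ioi
    intro s _
    simp only [Pi.sub_apply]
    ring
  have hsplit : Real.sqrt Real.pi
      = α * (∫ s in Ioi (0:ℝ), Real.exp (-(α * s - β / s) ^ 2))
        + α * (∫ s in Ioi (0:ℝ), Real.exp (-(α * s - β / s) ^ 2)) := by
    rw [← glasser_full α β hα hβ]
    rw [show (∫ s in Ioi (0:ℝ), (α + β / s ^ 2) * Real.exp (-(α * s - β / s) ^ 2))
        = ∫ s in Ioi (0:ℝ), (α * Real.exp (-(α * s - β / s) ^ 2)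
            + (β / s ^ 2) * Real.exp (-(α * s - β / s) ^ 2)) from
      setIntegral_congr_fun measurableSet_Ioi (fun s _ => by ring)]
    rw [integral_add hf1 hf2, integral_const_mul]
    congr 1
    have h2 : (∫ s in Ioi (0:ℝ), (β / s ^ 2) * Real.exp (-(α * s - β / s) ^ 2))
        = α * ∫ s in Ioi (0:ℝ), (β / (α * s ^ 2)) * Real.exp (-(α * s - β / s) ^ 2) := by
      rw [← integral_const_mul]
      apply setIntegral_congr_fun measurableSet_Ioi
      intro s hs
      simp only [mem_Ioi] at hs
      field_simp
    rw [h2, ← glasser_refl α β hα hβ]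
  have hα' : (2 * α) ≠ 0 := by positivity
  rw [eq_div_iff hα']
  linear_combination -hsplit

theorem integral_gaussian_subordinator (a b : ℝ) (ha : 0 < a) (hb : 0 < b) :
    ∫ w in Set.Ioi (0 : ℝ), w ^ (-(1/2) : ℝ) * Real.exp (-(a/2) * w - b/(2*w))
      = Real.sqrt (2 * Real.pi / a) * Real.exp (-Real.sqrt (a * b)) := by
  set α := Real.sqrt (a / 2) with hαdef
  set β := Real.sqrt (b / 2) with hβdef
  have hα : 0 < α := Real.sqrt_pos.mpr (by linarith)
  have hβ : 0 < β := Real.sqrt_pos.mpr (by linarith)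
  have hα2 : α ^ 2 = a / 2 := Real.sq_sqrt (by linarith)
  have hβ2 : β ^ 2 = b / 2 := Real.sq_sqrt (by linarith)
  have hab : Real.sqrt (a * b) = 2 * (α * β) := by
    rw [show a * b = (2 * (α * β)) ^ 2 by nlinarith [hα2, hβ2]]
    exact Real.sqrt_sq (by positivity)
  -- substitution w = t ^ 2
  have hderiv : ∀ t ∈ Ioi (0:ℝ), HasDerivWithinAt (fun t : ℝ => t ^ 2) (2 * t) (Ioi 0) t := by
    intro t _
    simpa using (hasDerivAt_pow 2 t).hasDerivWithinAt
  have hinj : InjOn (fun t : ℝ => t ^ 2) (Ioi 0) := by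
    have : StrictMonoOn (fun t : ℝ => t ^ 2) (Ioi 0) := by
      intro x hx y hy hxy
      simp only [mem_Ioi] at hx hy
      simp only
      nlinarith
    exact this.injOn
  have himg : (fun t : ℝ => t ^ 2) '' Ioi 0 = Ioi 0 := by
    ext y
    simp only [mem_image, mem_Ioi]
    constructor
    · rintro ⟨t, ht, rfl⟩; positivity
    · intro hy
      exact ⟨Real.sqrt y, Real.sqrt_pos.mpr hy, Real.sq_sqrt hy.le⟩
  have h := integral_image_eq_integral_abs_deriv_smul measurableSet_Ioi hderiv hinj
    (fun w => w ^ (-(1/2) : ℝ) * Real.exp (-(a/2) * w - b/(2*w)))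
  rw [himg] at h
  rw [h]
  have hcongr : ∀ t ∈ Ioi (0:ℝ),
      |2 * t| • (((t:ℝ) ^ 2) ^ (-(1/2) : ℝ) * Real.exp (-(a/2) * t ^ 2 - b/(2 * t ^ 2)))
        = (2 * Real.exp (-Real.sqrt (a * b))) * Real.exp (-(α * t - β / t) ^ 2) := by
    intro t ht
    simp only [mem_Ioi] at ht
    have ht' : t ≠ 0 := ne_of_gt ht
    have e1 : ((t:ℝ) ^ 2) ^ (-(1/2) : ℝ) = t⁻¹ := by
      rw [← Real.rpow_natCast t 2, ← Real.rpow_mul ht.le]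
      norm_num [Real.rpow_neg_one]
    have e2 : (α * t - β / t) ^ 2 = α ^ 2 * t ^ 2 - 2 * (α * β) + β ^ 2 / t ^ 2 := by
      field_simp
      ring
    have e3 : -(a/2) * t ^ 2 - b/(2 * t ^ 2)
        = -Real.sqrt (a * b) + (-(α * t - β / t) ^ 2) := by
      rw [e2, hα2, hβ2, hab]
      ring
    rw [e3, Real.exp_add, e1, abs_of_pos (by positivity), smul_eq_mul]
    field_simp
  rw [setIntegral_congr_fun measurableSet_Ioi hcongr, integral_const_mul,
    glasser_half α β hα hβ]
  have hsqrt : Real.sqrt (2 * Real.pi / a) = Real.sqrt Real.pi / α := by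
    rw [hαdef, ← Real.sqrt_div Real.pi_pos.le]
    congr 1
    field_simp
  rw [hsqrt]
  field_simp
end

section
/- For all positive reals t, a, b, the integral H(t,a,b) := ∫₀^t (t-s)^{-1/2} s^{-3/2} exp(-a/(2s)) exp(-b/(2(t-s))) ds equals sqrt(2π/(t·a)) · exp(-(sqrt(a)+sqrt(b))²/(2t)). -/
open MeasureTheory Real intervalIntegral
open Set

lemma glasser_deriv {m : ℝ} (u : ℝ) (hu : u ≠ 0) :
    HasDerivAt (fun u : ℝ => m * u - m / u) (m + m / u ^ 2) u := by
  have h := ((hasDerivAt_id u).const_mul m).sub ((hasDerivAt_inv hu).const_mul m)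
  simp only [div_eq_mul_inv]
  exact h.congr_deriv (by ring)

lemma glasser_inj {m : ℝ} (hm : 0 < m) : InjOn (fun u : ℝ => m * u - m / u) (Ioi 0) := by
  apply StrictMonoOn.injOn
  intro x hx y hy hxy
  simp only [mem_Ioi] at hx hy
  have h1 : m / y < m / x := div_lt_div_of_pos_left hm hx hxy
  have h2 : m * x < m * y := by nlinarith
  simp only
  linarith

lemma glasser_image {m : ℝ} (hm : 0 < m) :
    (fun u : ℝ => m * u - m / u) '' Ioi 0 = univ := by
  apply eq_univ_of_forall
  intro v
  have hr2 : Real.sqrt (v ^ 2 + 4 * m ^ 2) ^ 2 = v ^ 2 + 4 * m ^ 2 :=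
    Real.sq_sqrt (by positivity)
  have hr0 : 0 ≤ Real.sqrt (v ^ 2 + 4 * m ^ 2) := Real.sqrt_nonneg _
  set r := Real.sqrt (v ^ 2 + 4 * m ^ 2) with hrdef
  have hrv : -v < r := by nlinarith
  have hu : (0:ℝ) < (v + r) / (2 * m) := div_pos (by linarith) (by linarith)
  refine ⟨(v + r) / (2 * m), hu, ?_⟩
  have h2m : (2 * m) ≠ 0 := by positivity
  have hvr : v + r ≠ 0 := by linarith
  field_simp
  nlinarith [hr2]

lemma inv_image_Ioi : (fun u : ℝ => u⁻¹) '' Ioi 0 = Ioi 0 := by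
  ext v
  constructor
  · rintro ⟨u, hu, rfl⟩
    exact mem_Ioi.mpr (inv_pos.mpr (mem_Ioi.mp hu))
  · intro hv
    exact ⟨v⁻¹, mem_Ioi.mpr (inv_pos.mpr (mem_Ioi.mp hv)), inv_inv v⟩

lemma gauss_glasser {m : ℝ} (hm : 0 < m) :
    ∫ u in Ioi (0:ℝ), Real.exp (-(m * u - m / u) ^ 2) = Real.sqrt π / (2 * m) := by
  set f : ℝ → ℝ := fun u => m * u - m / u with hf
  have hderiv : ∀ u ∈ Ioi (0:ℝ), HasDerivWithinAt f (m + m / u ^ 2) (Ioi 0) u :=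
    fun u hu => (glasser_deriv u (ne_of_gt hu)).hasDerivWithinAt
  have hinj := glasser_inj hm
  have himg := glasser_image hm
  have hgauss : Integrable (fun v : ℝ => Real.exp (-v ^ 2)) := by
    simpa using integrable_exp_neg_mul_sq (one_pos (α := ℝ))
  -- total integral via change of variables
  have hcv := integral_image_eq_integral_abs_deriv_smul (f' := fun u => m + m / u ^ 2)
      measurableSet_Ioi hderiv hinj (fun v => Real.exp (-v ^ 2))
  rw [himg] at hcv
  have habs : ∀ u ∈ Ioi (0:ℝ), |m + m / u ^ 2| • Real.exp (-(f u) ^ 2)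
      = (m + m / u ^ 2) * Real.exp (-(f u) ^ 2) := by
    intro u hu
    simp only [mem_Ioi] at hu
    rw [smul_eq_mul, abs_of_pos (by positivity)]
  have hpi : Real.sqrt π = ∫ u in Ioi (0:ℝ), (m + m / u ^ 2) * Real.exp (-(f u) ^ 2) := by
    rw [← setIntegral_congr_fun measurableSet_Ioi habs, ← hcv]
    rw [setIntegral_univ]
    simpa using (integral_gaussian 1).symm
  -- integrability of combined integrand
  have hIcomb : IntegrableOn (fun u => (m + m / u ^ 2) * Real.exp (-(f u) ^ 2)) (Ioi 0) := by
    have := (integrableOn_image_iff_integrableOn_abs_deriv_smul (f' := fun u => m + m / u ^ 2)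
        measurableSet_Ioi hderiv hinj (fun v => Real.exp (-v ^ 2))).mp
        (by rw [himg]; exact hgauss.integrableOn)
    exact this.congr_fun habs measurableSet_Ioi
  have hmeas1 : AEStronglyMeasurable (fun u : ℝ => m * Real.exp (-(f u) ^ 2))
      (volume.restrict (Ioi 0)) := by
    apply Measurable.aestronglyMeasurable
    simp only [hf]; fun_prop
  have hmeas2 : AEStronglyMeasurable (fun u : ℝ => (m / u ^ 2) * Real.exp (-(f u) ^ 2))
      (volume.restrict (Ioi 0)) := by
    apply Measurable.aestronglyMeasurable
    simp only [hf]; fun_prop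
  have hI1 : IntegrableOn (fun u : ℝ => m * Real.exp (-(f u) ^ 2)) (Ioi 0) := by
    refine hIcomb.mono' hmeas1 ?_
    filter_upwards [ae_restrict_mem measurableSet_Ioi] with u hu
    simp only [mem_Ioi] at hu
    rw [Real.norm_eq_abs, abs_of_pos (by positivity)]
    have : 0 < Real.exp (-(f u) ^ 2) := Real.exp_pos _
    nlinarith [div_nonneg hm.le (sq_nonneg u)]
  have hI2 : IntegrableOn (fun u : ℝ => (m / u ^ 2) * Real.exp (-(f u) ^ 2)) (Ioi 0) := by
    refine hIcomb.mono' hmeas2 ?_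
    filter_upwards [ae_restrict_mem measurableSet_Ioi] with u hu
    simp only [mem_Ioi] at hu
    rw [Real.norm_eq_abs, abs_of_nonneg (by positivity)]
    have : 0 < Real.exp (-(f u) ^ 2) := Real.exp_pos _
    nlinarith [div_nonneg hm.le (sq_nonneg u)]
  -- the substitution u ↦ u⁻¹ shows the two pieces are equal
  have hsub : ∫ u in Ioi (0:ℝ), m * Real.exp (-(f u) ^ 2)
      = ∫ u in Ioi (0:ℝ), (m / u ^ 2) * Real.exp (-(f u) ^ 2) := by
    have hd2 : ∀ u ∈ Ioi (0:ℝ), HasDerivWithinAt (fun u : ℝ => u⁻¹) (-(u ^ 2)⁻¹) (Ioi 0) u :=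
      fun u hu => (hasDerivAt_inv (ne_of_gt hu)).hasDerivWithinAt
    have hinj2 : InjOn (fun u : ℝ => u⁻¹) (Ioi 0) :=
      fun x _ y _ h => inv_injective h
    have := integral_image_eq_integral_abs_deriv_smul (f' := fun u => -(u ^ 2)⁻¹)
        measurableSet_Ioi hd2 hinj2 (fun u => m * Real.exp (-(f u) ^ 2))
    rw [inv_image_Ioi] at this
    rw [this]
    refine setIntegral_congr_fun measurableSet_Ioi (fun u hu => ?_)
    simp only [mem_Ioi] at hu
    have hu' : u ≠ 0 := ne_of_gt hu
    have hfval : f u⁻¹ = -(f u) := by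
      simp only [hf]
      field_simp
      ring
    rw [hfval, smul_eq_mul, abs_neg, abs_of_nonneg (by positivity), neg_sq]
    ring
  -- assemble
  have hsplit : ∫ u in Ioi (0:ℝ), (m + m / u ^ 2) * Real.exp (-(f u) ^ 2)
      = (∫ u in Ioi (0:ℝ), m * Real.exp (-(f u) ^ 2))
        + ∫ u in Ioi (0:ℝ), (m / u ^ 2) * Real.exp (-(f u) ^ 2) := by
    rw [← integral_add hI1 hI2]
    refine setIntegral_congr_fun measurableSet_Ioi (fun u hu => ?_)
    ring
  have hG : ∫ u in Ioi (0:ℝ), m * Real.exp (-(f u) ^ 2)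
      = m * ∫ u in Ioi (0:ℝ), Real.exp (-(f u) ^ 2) := integral_const_mul m _
  have : Real.sqrt π = 2 * (m * ∫ u in Ioi (0:ℝ), Real.exp (-(f u) ^ 2)) := by
    rw [hpi, hsplit, ← hsub, hG]; ring
  have hfin : ∫ u in Ioi (0:ℝ), Real.exp (-(f u) ^ 2) = Real.sqrt π / (2 * m) := by
    field_simp
    linarith [this]
  simpa [hf] using hfin

lemma sq_image_Ioi : (fun u : ℝ => u ^ 2) '' Ioi 0 = Ioi 0 := by
  ext v
  constructor
  · rintro ⟨u, hu, rfl⟩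
    exact mem_Ioi.mpr (pow_pos (mem_Ioi.mp hu) 2)
  · intro hv
    exact ⟨Real.sqrt v, Real.sqrt_pos.mpr hv, Real.sq_sqrt hv.out.le⟩

lemma key_integral {p q : ℝ} (hp : 0 < p) (hq : 0 < q) :
    ∫ w in Ioi (0:ℝ), w ^ (-(1/2) : ℝ) * Real.exp (-(p * w) - q / w)
      = Real.sqrt (π / p) * Real.exp (-(2 * Real.sqrt (p * q))) := by
  have hsp : (0:ℝ) < Real.sqrt p := Real.sqrt_pos.mpr hp
  have hsq : (0:ℝ) < Real.sqrt q := Real.sqrt_pos.mpr hq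
  have hsp2 : Real.sqrt p ^ 2 = p := Real.sq_sqrt hp.le
  have hsq2 : Real.sqrt q ^ 2 = q := Real.sq_sqrt hq.le
  have hspq : Real.sqrt p * Real.sqrt q = Real.sqrt (p * q) := (Real.sqrt_mul hp.le q).symm
  -- substitute w = u^2
  have hd : ∀ u ∈ Ioi (0:ℝ), HasDerivWithinAt (fun u : ℝ => u ^ 2) (2 * u) (Ioi 0) u := by
    intro u hu
    simpa using (hasDerivAt_pow 2 u).hasDerivWithinAt
  have hinj : InjOn (fun u : ℝ => u ^ 2) (Ioi 0) := by
    intro x hx y hy h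
    simp only [mem_Ioi] at hx hy
    simp only at h
    calc x = Real.sqrt (x ^ 2) := (Real.sqrt_sq hx.le).symm
    _ = Real.sqrt (y ^ 2) := by rw [h]
    _ = y := Real.sqrt_sq hy.le
  have hcv := integral_image_eq_integral_abs_deriv_smul (f' := fun u => 2 * u)
      measurableSet_Ioi hd hinj
      (fun w => w ^ (-(1/2) : ℝ) * Real.exp (-(p * w) - q / w))
  rw [sq_image_Ioi] at hcv
  rw [hcv]
  set m := Real.sqrt (Real.sqrt p * Real.sqrt q) with hmdef
  have hm : 0 < m := Real.sqrt_pos.mpr (by positivity)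
  set lam := Real.sqrt (Real.sqrt q / Real.sqrt p) with hlamdef
  have hlam : 0 < lam := Real.sqrt_pos.mpr (by positivity)
  have hlm1 : m / lam = Real.sqrt p := by
    rw [hmdef, hlamdef, ← Real.sqrt_div (by positivity)]
    congr 1
    field_simp
    linear_combination hsp2
  have hlm2 : m * lam = Real.sqrt q := by
    rw [hmdef, hlamdef, ← Real.sqrt_mul (by positivity)]
    congr 1
    field_simp
    nlinarith [hsp2]
  -- pointwise rewrite of the integrand
  have hpt : ∀ u ∈ Ioi (0:ℝ),
      |2 * u| • ((fun w : ℝ => w ^ (-(1/2) : ℝ) * Real.exp (-(p * w) - q / w)) (u ^ 2))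
        = (2 * Real.exp (-(2 * Real.sqrt (p * q)))) *
            Real.exp (-(m * (lam⁻¹ * u) - m / (lam⁻¹ * u)) ^ 2) := by
    intro u hu
    simp only [mem_Ioi] at hu
    have hu' : u ≠ 0 := ne_of_gt hu
    have h1 : ((u ^ 2 : ℝ)) ^ (-(1/2) : ℝ) = u⁻¹ := by
      rw [← Real.rpow_natCast u 2, ← Real.rpow_mul hu.le]
      norm_num
      exact Real.rpow_neg_one u
    have h2 : m * (lam⁻¹ * u) - m / (lam⁻¹ * u)
        = Real.sqrt p * u - Real.sqrt q / u := by
      have e : m * (lam⁻¹ * u) - m / (lam⁻¹ * u) = (m / lam) * u - (m * lam) / u := by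
        field_simp
      rw [e, hlm1, hlm2]
    have h3 : -(p * u ^ 2) - q / u ^ 2
        = -(Real.sqrt p * u - Real.sqrt q / u) ^ 2 + -(2 * Real.sqrt (p * q)) := by
      have hexp : (Real.sqrt p * u - Real.sqrt q / u) ^ 2
          = p * u ^ 2 - 2 * Real.sqrt (p * q) + q / u ^ 2 := by
        rw [← hspq]
        field_simp
        linear_combination (u ^ 2 * u ^ 2) * hsp2 + hsq2
      rw [hexp]; ring
    simp only [h1, h2, h3, Real.exp_add, smul_eq_mul, abs_of_pos (by positivity : (0:ℝ) < 2 * u)]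
    field_simp
  rw [setIntegral_congr_fun measurableSet_Ioi hpt, MeasureTheory.integral_const_mul]
  have hscale := integral_comp_mul_left_Ioi
      (fun x => Real.exp (-(m * x - m / x) ^ 2)) 0 (inv_pos.mpr hlam)
  simp only [mul_zero] at hscale
  rw [hscale, inv_inv, gauss_glasser hm, smul_eq_mul]
  -- final numeric identity
  have hm' : m = Real.sqrt p * lam := by
    rw [← hlm1]; field_simp
  have hfin : 2 * (lam * (Real.sqrt π / (2 * m))) = Real.sqrt (π / p) := by
    rw [Real.sqrt_div Real.pi_pos.le, hm']
    field_simp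
  rw [← hfin]
  ring

theorem H_formula (t a b : ℝ) (ht : 0 < t) (ha : 0 < a) (hb : 0 < b) :
    ∫ s in (0:ℝ)..t, (t - s) ^ (-(1/2) : ℝ) * s ^ (-(3/2) : ℝ) *
        Real.exp (-a/(2*s)) * Real.exp (-b/(2*(t-s)))
      = Real.sqrt (2 * Real.pi / (t * a)) *
        Real.exp (-(Real.sqrt a + Real.sqrt b)^2 / (2*t)) := by
  set p : ℝ := a / 2 with hpdef
  set q : ℝ := b / (2 * t ^ 2) with hqdef
  have hp : 0 < p := by positivity
  have hq : 0 < q := by positivity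
  set g : ℝ → ℝ := fun w => w ^ (-(1/2) : ℝ) * Real.exp (-(p * w) - q / w) with hgdef
  -- the substitution map
  have hd : ∀ s ∈ Ioo (0:ℝ) t, HasDerivWithinAt (fun s : ℝ => s⁻¹ - t⁻¹)
      (-(s ^ 2)⁻¹) (Ioo 0 t) s :=
    fun s hs => ((hasDerivAt_inv (ne_of_gt hs.1)).sub_const t⁻¹).hasDerivWithinAt
  have hinj : InjOn (fun s : ℝ => s⁻¹ - t⁻¹) (Ioo 0 t) := by
    apply StrictAntiOn.injOn
    intro x hx y hy hxy
    have h1 : 1 / y < 1 / x := div_lt_div_of_pos_left one_pos hx.1 hxy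
    simp only [one_div] at h1
    simp only
    linarith
  have himg : (fun s : ℝ => s⁻¹ - t⁻¹) '' Ioo 0 t = Ioi 0 := by
    ext v
    simp only [mem_image, mem_Ioi]
    constructor
    · rintro ⟨s, hs, rfl⟩
      have h1 : 1 / t < 1 / s := div_lt_div_of_pos_left one_pos hs.1 hs.2
      simp only [one_div] at h1
      linarith
    · intro hv
      have hvt : (0:ℝ) < v + t⁻¹ := by positivity
      refine ⟨(v + t⁻¹)⁻¹, ⟨inv_pos.mpr hvt, ?_⟩, ?_⟩
      · have h1 : 1 / (v + t⁻¹) < 1 / t⁻¹ :=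
          div_lt_div_of_pos_left one_pos (inv_pos.mpr ht) (by linarith)
        simpa [one_div, inv_inv] using h1
      · rw [inv_inv]; ring
  have hcv := integral_image_eq_integral_abs_deriv_smul (f' := fun s => -(s ^ 2)⁻¹)
      measurableSet_Ioo hd hinj g
  rw [himg] at hcv
  -- pointwise identity on (0, t)
  set C : ℝ := t ^ (-(1/2) : ℝ) * Real.exp (-((a + b) / (2 * t))) with hCdef
  have hpt : ∀ s ∈ Ioo (0:ℝ) t,
      (t - s) ^ (-(1/2) : ℝ) * s ^ (-(3/2) : ℝ) *
          Real.exp (-a/(2*s)) * Real.exp (-b/(2*(t-s)))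
        = C * (|(-(s ^ 2)⁻¹)| • g (s⁻¹ - t⁻¹)) := by
    intro s hs
    obtain ⟨hs0, hst⟩ := hs
    have hts : 0 < t - s := sub_pos.mpr hst
    have hw : s⁻¹ - t⁻¹ = (t - s) / (t * s) := by
      field_simp
      try exact Or.inl (mul_comm t s)
      try ring
    have hw0 : 0 < s⁻¹ - t⁻¹ := by rw [hw]; positivity
    -- rpow computations
    have h1 : (s⁻¹ - t⁻¹) ^ (-(1/2) : ℝ)
        = (t - s) ^ (-(1/2) : ℝ) * (t * s) ^ ((1/2) : ℝ) := by
      rw [hw, Real.div_rpow hts.le (by positivity), Real.rpow_neg (by positivity : (0:ℝ) ≤ t * s),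
        div_eq_mul_inv, inv_inv]
    have h2 : ((t : ℝ) * s) ^ ((1/2) : ℝ) = t ^ ((1/2) : ℝ) * s ^ ((1/2) : ℝ) :=
      Real.mul_rpow ht.le hs0.le
    have h3 : (s ^ 2 : ℝ)⁻¹ = s ^ ((-2 : ℝ)) := by
      rw [show ((-2:ℝ)) = -((2:ℕ):ℝ) by norm_num, Real.rpow_neg hs0.le, Real.rpow_natCast]
    have h4 : s ^ ((1/2) : ℝ) * s ^ ((-2) : ℝ) = s ^ (-(3/2) : ℝ) := by
      rw [← Real.rpow_add hs0]; norm_num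
    have h5 : t ^ ((1/2) : ℝ) * t ^ (-(1/2) : ℝ) = 1 := by
      rw [← Real.rpow_add ht]; norm_num
    -- exponent computation
    have h6 : -(p * (s⁻¹ - t⁻¹)) - q / (s⁻¹ - t⁻¹)
        = -a/(2*s) + (-b/(2*(t-s))) + (a + b) / (2 * t) := by
      rw [hw, hpdef, hqdef]
      field_simp
      ring
    have habs : |(-(s ^ 2)⁻¹ : ℝ)| = (s ^ 2)⁻¹ := by
      rw [abs_neg, abs_of_pos (by positivity)]
    have hE0 : Real.exp (-((a + b) / (2 * t))) * Real.exp ((a + b) / (2 * t)) = 1 := by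
      rw [← Real.exp_add]; simp
    rw [habs, smul_eq_mul, hgdef]
    simp only
    rw [h1, h2, h6, Real.exp_add, Real.exp_add, h3, hCdef]
    calc (t - s) ^ (-(1/2):ℝ) * s ^ (-(3/2):ℝ) *
          Real.exp (-a/(2*s)) * Real.exp (-b/(2*(t-s)))
        = (t ^ ((1/2):ℝ) * t ^ (-(1/2):ℝ)) * (s ^ ((1/2):ℝ) * s ^ ((-2):ℝ)) *
            (t - s) ^ (-(1/2):ℝ) *
            (Real.exp (-((a + b) / (2 * t))) * Real.exp ((a + b) / (2 * t))) *
            (Real.exp (-a/(2*s)) * Real.exp (-b/(2*(t-s)))) := by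
          rw [h5, h4, hE0]; ring
    _ = _ := by ring
  rw [intervalIntegral.integral_of_le ht.le, integral_Ioc_eq_integral_Ioo,
    setIntegral_congr_fun measurableSet_Ioo hpt, MeasureTheory.integral_const_mul, ← hcv,
    key_integral hp hq]
  -- final numeric identity
  have hC1 : t ^ (-(1/2) : ℝ) = (Real.sqrt t)⁻¹ := by
    rw [Real.rpow_neg ht.le, Real.sqrt_eq_rpow]
  have hS : (Real.sqrt t)⁻¹ * Real.sqrt (π / p) = Real.sqrt (2 * π / (t * a)) := by
    rw [← Real.sqrt_inv, ← Real.sqrt_mul (by positivity)]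
    congr 1
    rw [hpdef]
    field_simp
  have hE : Real.exp (-((a + b) / (2 * t))) * Real.exp (-(2 * Real.sqrt (p * q)))
      = Real.exp (-(Real.sqrt a + Real.sqrt b)^2 / (2*t)) := by
    rw [← Real.exp_add]
    congr 1
    have hpq : p * q = (Real.sqrt (a*b) / (2*t))^2 := by
      rw [hpdef, hqdef, div_pow, Real.sq_sqrt (by positivity)]
      ring
    rw [hpq, Real.sqrt_sq (by positivity)]
    have hab : (Real.sqrt a + Real.sqrt b)^2 = a + b + 2 * Real.sqrt (a*b) := by
      rw [add_sq, Real.sq_sqrt ha.le, Real.sq_sqrt hb.le, Real.sqrt_mul ha.le]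
      ring
    rw [hab]
    field_simp
    ring
  calc C * (Real.sqrt (π / p) * Real.exp (-(2 * Real.sqrt (p * q))))
      = ((Real.sqrt t)⁻¹ * Real.sqrt (π / p)) *
        (Real.exp (-((a + b) / (2 * t))) * Real.exp (-(2 * Real.sqrt (p * q)))) := by
        rw [hCdef, hC1]; ring
  _ = _ := by rw [hS, hE]
end

section
/- For all t > 0 and x, y > 1, ∫₀^t ((x-1)/x)(2πs³)^{-1/2} e^{-(x-1)²/(2s)} · (2π(t-s))^{-1/2} · y · (e^{-(1-y)²/(2(t-s))} - e^{-(1+y)²/(2(t-s))}) ds = (2πt)^{-1/2} (y/x) ( e^{-(x+y-2)²/(2t)} - e^{-(x+y)²/(2t)} ). -/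
open MeasureTheory Real intervalIntegral

section HuntAux

open Set Filter

noncomputable def uF (t a b : ℝ) : ℝ → ℝ := fun s =>
  (a * (Real.sqrt (t-s)/Real.sqrt s) - b * (Real.sqrt s/Real.sqrt (t-s))) / Real.sqrt t

noncomputable def wF (t a b : ℝ) : ℝ → ℝ := fun s =>
  (a * (Real.sqrt (t-s)/Real.sqrt s) + b * (Real.sqrt s/Real.sqrt (t-s))) / Real.sqrt t

theorem my_integral_Ioo_of_hasDerivAt_of_tendsto {f f' : ℝ → ℝ} {α β fa fb : ℝ} (hab : α < β)
    (hderiv : ∀ x ∈ Set.Ioo α β, HasDerivAt f (f' x) x)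
    (hint : IntegrableOn f' (Set.Ioo α β))
    (hfa : Tendsto f (nhdsWithin α (Set.Ioo α β)) (nhds fa))
    (hfb : Tendsto f (nhdsWithin β (Set.Ioo α β)) (nhds fb)) :
    ∫ x in Set.Ioo α β, f' x = fb - fa := by
  set d : ℕ → ℝ := fun n => (β - α) / (n + 3) with hd
  have hd0 : ∀ n, 0 < d n := fun n => div_pos (by linarith) (by positivity)
  have hdlt : ∀ n, 2 * d n < β - α := by
    intro n
    have h3 : (0:ℝ) < (n:ℝ) + 3 := by positivity
    show 2 * ((β - α) / (n + 3)) < β - α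
    rw [mul_div_assoc', div_lt_iff₀ h3]
    have := Nat.cast_nonneg (α := ℝ) n
    nlinarith [sub_pos.mpr hab]
  have hdanti : Antitone d := by
    intro m n hmn
    apply div_le_div_of_nonneg_left (by linarith) (by positivity)
    have : (m:ℝ) ≤ (n:ℝ) := Nat.cast_le.mpr hmn
    linarith
  have hdtend : Tendsto d atTop (nhds 0) := by
    rw [hd]
    exact Tendsto.div_atTop tendsto_const_nhds
      (tendsto_atTop_add_const_right atTop 3 tendsto_natCast_atTop_atTop)
  set s : ℕ → Set ℝ := fun n => Icc (α + d n) (β - d n) with hs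
  have hsub : ∀ n, s n ⊆ Set.Ioo α β := by
    intro n x hx
    exact ⟨lt_of_lt_of_le (by linarith [hd0 n]) hx.1, lt_of_le_of_lt hx.2 (by linarith [hd0 n])⟩
  have hmono : Monotone s := by
    intro m n hmn
    exact Icc_subset_Icc (by linarith [hdanti hmn]) (by linarith [hdanti hmn])
  have hunion : (⋃ n, s n) = Set.Ioo α β := by
    apply Set.Subset.antisymm (Set.iUnion_subset hsub)
    intro x hx
    have h1 : ∀ᶠ n in atTop, d n < min (x - α) (β - x) :=
      hdtend.eventually_lt_const (lt_min (by linarith [hx.1]) (by linarith [hx.2]))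
    obtain ⟨n, hn⟩ := h1.exists
    exact Set.mem_iUnion.2 ⟨n, ⟨by linarith [lt_of_lt_of_le hn (min_le_left _ _)],
      by linarith [lt_of_lt_of_le hn (min_le_right _ _)]⟩⟩
  have hle : ∀ n, α + d n ≤ β - d n := fun n => by linarith [hdlt n]
  have key : ∀ n, ∫ x in s n, f' x = f (β - d n) - f (α + d n) := by
    intro n
    rw [hs]
    rw [MeasureTheory.integral_Icc_eq_integral_Ioc,
      ← intervalIntegral.integral_of_le (hle n)]
    apply intervalIntegral.integral_eq_sub_of_hasDerivAt
    · intro x hx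
      rw [Set.uIcc_of_le (hle n)] at hx
      exact hderiv x (hsub n hx)
    · rw [intervalIntegrable_iff_integrableOn_Ioc_of_le (hle n)]
      exact hint.mono_set (fun x hx => hsub n ⟨le_of_lt hx.1, hx.2⟩)
  have htend : Tendsto (fun n => ∫ x in s n, f' x) atTop (nhds (∫ x in Set.Ioo α β, f' x)) := by
    have := tendsto_setIntegral_of_monotone (fun n => measurableSet_Icc) hmono
      (by rw [hunion]; exact hint)
    rwa [hunion] at this
  have htend2 : Tendsto (fun n => f (β - d n) - f (α + d n)) atTop (nhds (fb - fa)) := by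
    apply Tendsto.sub
    · apply hfb.comp
      rw [tendsto_nhdsWithin_iff]
      constructor
      · have : Tendsto (fun n => β - d n) atTop (nhds (β - 0)) :=
          tendsto_const_nhds.sub hdtend
        simpa using this
      · exact Eventually.of_forall fun n =>
          ⟨by linarith [hd0 n, hdlt n], by linarith [hd0 n]⟩
    · apply hfa.comp
      rw [tendsto_nhdsWithin_iff]
      constructor
      · have : Tendsto (fun n => α + d n) atTop (nhds (α + 0)) :=
          tendsto_const_nhds.add hdtend
        simpa using this
      · exact Eventually.of_forall fun n =>
          ⟨by linarith [hd0 n], by linarith [hd0 n, hdlt n]⟩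
  exact tendsto_nhds_unique (by simpa only [key] using htend) htend2

lemma hasDerivAt_fq {t s : ℝ} (h0 : 0 < s) (hst : s < t) :
    HasDerivAt (fun r => Real.sqrt (t - r) / Real.sqrt r)
      (-t / (2 * (s * Real.sqrt s * Real.sqrt (t - s)))) s := by
  have hts : 0 < t - s := by linarith
  have hσ : 0 < Real.sqrt s := Real.sqrt_pos.mpr h0
  have hτ : 0 < Real.sqrt (t - s) := Real.sqrt_pos.mpr hts
  have hs1 : HasDerivAt (fun r : ℝ => t - r) (-1) s := by
    simpa using (hasDerivAt_id s).const_sub t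
  have h2 : HasDerivAt (fun r => Real.sqrt (t - r)) (1 / (2 * Real.sqrt (t - s)) * (-1)) s :=
    (Real.hasDerivAt_sqrt hts.ne').comp s hs1
  have h3 : HasDerivAt Real.sqrt (1 / (2 * Real.sqrt s)) s := Real.hasDerivAt_sqrt h0.ne'
  have h4 := h2.div h3 hσ.ne'
  have h4' : HasDerivAt (fun r => Real.sqrt (t - r) / Real.sqrt r) _ s := h4
  convert h4' using 1
  have hss : Real.sqrt s * Real.sqrt s = s := Real.mul_self_sqrt h0.le
  have htt : Real.sqrt (t - s) * Real.sqrt (t - s) = t - s := Real.mul_self_sqrt hts.le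
  field_simp
  ring_nf
  linear_combination (-(t-s))*hss + s*htt

lemma hasDerivAt_gq {t s : ℝ} (h0 : 0 < s) (hst : s < t) :
    HasDerivAt (fun r => Real.sqrt r / Real.sqrt (t - r))
      (t / (2 * (Real.sqrt s * (t - s) * Real.sqrt (t - s)))) s := by
  have hts : 0 < t - s := by linarith
  have hσ : 0 < Real.sqrt s := Real.sqrt_pos.mpr h0
  have hτ : 0 < Real.sqrt (t - s) := Real.sqrt_pos.mpr hts
  have hs1 : HasDerivAt (fun r : ℝ => t - r) (-1) s := by
    simpa using (hasDerivAt_id s).const_sub t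
  have h2 : HasDerivAt (fun r => Real.sqrt (t - r)) (1 / (2 * Real.sqrt (t - s)) * (-1)) s :=
    (Real.hasDerivAt_sqrt hts.ne').comp s hs1
  have h3 : HasDerivAt Real.sqrt (1 / (2 * Real.sqrt s)) s := Real.hasDerivAt_sqrt h0.ne'
  have h4 := h3.div h2 hτ.ne'
  have h4' : HasDerivAt (fun r => Real.sqrt r / Real.sqrt (t - r)) _ s := h4
  convert h4' using 1
  have hss : Real.sqrt s * Real.sqrt s = s := Real.mul_self_sqrt h0.le
  have htt : Real.sqrt (t - s) * Real.sqrt (t - s) = t - s := Real.mul_self_sqrt hts.le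
  field_simp
  ring_nf
  linear_combination (-(t-s))*hss
    + s*htt

lemma sq_decomp {t s : ℝ} (h0 : 0 < s) (hst : s < t) :
    ∃ σ τ : ℝ, 0 < σ ∧ 0 < τ ∧ s = σ^2 ∧ t = σ^2 + τ^2 := by
  refine ⟨Real.sqrt s, Real.sqrt (t - s), Real.sqrt_pos.mpr h0,
    Real.sqrt_pos.mpr (by linarith), (Real.sq_sqrt h0.le).symm, ?_⟩
  rw [Real.sq_sqrt h0.le, Real.sq_sqrt (by linarith : (0:ℝ) ≤ t - s)]
  ring

lemma hasDerivAt_u {t a b s : ℝ} (h0 : 0 < s) (hst : s < t) :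
    HasDerivAt (uF t a b)
      (-(Real.sqrt t/2) * (a/(s * Real.sqrt s * Real.sqrt (t-s))
          + b/(Real.sqrt s * (t-s) * Real.sqrt (t-s)))) s := by
  unfold uF
  have h4 := (((hasDerivAt_fq h0 hst).const_mul a).sub
    ((hasDerivAt_gq h0 hst).const_mul b)).div_const (Real.sqrt t)
  have h4' : HasDerivAt (fun s => (a * (Real.sqrt (t-s)/Real.sqrt s)
    - b * (Real.sqrt s/Real.sqrt (t-s))) / Real.sqrt t) _ s := h4
  convert h4' using 1
  obtain ⟨σ, τ, hσ, hτ, rfl, rfl⟩ := sq_decomp h0 hst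
  have h1 : σ^2 + τ^2 - σ^2 = τ^2 := by ring
  rw [h1, Real.sqrt_sq hσ.le, Real.sqrt_sq hτ.le]
  have h3 : Real.sqrt (σ^2+τ^2) * Real.sqrt (σ^2+τ^2) = σ^2+τ^2 :=
    Real.mul_self_sqrt (by positivity)
  have h2 : Real.sqrt (σ^2+τ^2) ≠ 0 := by positivity
  field_simp
  ring_nf
  linear_combination (-(σ^2*b) - τ^2*a) * h3

lemma hasDerivAt_w {t a b s : ℝ} (h0 : 0 < s) (hst : s < t) :
    HasDerivAt (wF t a b)
      ((Real.sqrt t/2) * (-(a/(s * Real.sqrt s * Real.sqrt (t-s)))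
          + b/(Real.sqrt s * (t-s) * Real.sqrt (t-s)))) s := by
  unfold wF
  have h4 := (((hasDerivAt_fq h0 hst).const_mul a).add
    ((hasDerivAt_gq h0 hst).const_mul b)).div_const (Real.sqrt t)
  have h4' : HasDerivAt (fun s => (a * (Real.sqrt (t-s)/Real.sqrt s)
    + b * (Real.sqrt s/Real.sqrt (t-s))) / Real.sqrt t) _ s := h4
  convert h4' using 1
  obtain ⟨σ, τ, hσ, hτ, rfl, rfl⟩ := sq_decomp h0 hst
  have h1 : σ^2 + τ^2 - σ^2 = τ^2 := by ring
  rw [h1, Real.sqrt_sq hσ.le, Real.sqrt_sq hτ.le]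
  have h3 : Real.sqrt (σ^2+τ^2) * Real.sqrt (σ^2+τ^2) = σ^2+τ^2 :=
    Real.mul_self_sqrt (by positivity)
  have h2 : Real.sqrt (σ^2+τ^2) ≠ 0 := by positivity
  field_simp
  ring_nf
  linear_combination (σ^2*b - τ^2*a) * h3

lemma exp_id_u {t a b s : ℝ} (h0 : 0 < s) (hst : s < t) :
    -(a^2/s + b^2/(t-s))/2 = -((uF t a b s)^2)/2 - (a+b)^2/(2*t) := by
  unfold uF
  obtain ⟨σ, τ, hσ, hτ, rfl, rfl⟩ := sq_decomp h0 hst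
  have h1 : σ^2 + τ^2 - σ^2 = τ^2 := by ring
  rw [h1, Real.sqrt_sq hσ.le, Real.sqrt_sq hτ.le, div_pow, Real.sq_sqrt (by positivity)]
  have h2 : σ^2 + τ^2 ≠ 0 := by positivity
  field_simp
  ring

lemma exp_id_w {t a b s : ℝ} (h0 : 0 < s) (hst : s < t) :
    -(a^2/s + b^2/(t-s))/2 = -((wF t a b s)^2)/2 - (a-b)^2/(2*t) := by
  unfold wF
  obtain ⟨σ, τ, hσ, hτ, rfl, rfl⟩ := sq_decomp h0 hst
  have h1 : σ^2 + τ^2 - σ^2 = τ^2 := by ring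
  rw [h1, Real.sqrt_sq hσ.le, Real.sqrt_sq hτ.le, div_pow, Real.sq_sqrt (by positivity)]
  have h2 : σ^2 + τ^2 ≠ 0 := by positivity
  field_simp
  ring

lemma sqrt_tendsto_zero {t : ℝ} (ht : 0 < t) :
    Tendsto (fun s => Real.sqrt s) (nhdsWithin 0 (Set.Ioo 0 t)) (nhdsWithin 0 (Set.Ioi 0)) := by
  rw [tendsto_nhdsWithin_iff]
  constructor
  · apply tendsto_nhdsWithin_of_tendsto_nhds
    have := (Real.continuous_sqrt.tendsto 0)
    simpa using this
  · filter_upwards [self_mem_nhdsWithin] with s hs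
    exact Real.sqrt_pos.mpr hs.1

lemma sqrt_ts_tendsto_zero {t : ℝ} (ht : 0 < t) :
    Tendsto (fun s => Real.sqrt (t - s)) (nhdsWithin t (Set.Ioo 0 t))
      (nhdsWithin 0 (Set.Ioi 0)) := by
  rw [tendsto_nhdsWithin_iff]
  constructor
  · apply tendsto_nhdsWithin_of_tendsto_nhds
    have h1 : Tendsto (fun s : ℝ => t - s) (nhds t) (nhds 0) := by
      have := ((continuous_const (y := t)).sub continuous_id).tendsto t
      simpa [Pi.sub_def] using this
    have := (Real.continuous_sqrt.tendsto 0).comp h1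
    simpa [Function.comp_def] using this
  · filter_upwards [self_mem_nhdsWithin] with s hs
    exact Real.sqrt_pos.mpr (by linarith [hs.2])

lemma term1_atTop {t a : ℝ} (ht : 0 < t) (ha : 0 < a) :
    Tendsto (fun s => a * (Real.sqrt (t-s)/Real.sqrt s)) (nhdsWithin 0 (Set.Ioo 0 t)) atTop := by
  have h1 : Tendsto (fun s => a * Real.sqrt (t-s)) (nhdsWithin 0 (Set.Ioo 0 t))
      (nhds (a * Real.sqrt t)) := by
    apply tendsto_nhdsWithin_of_tendsto_nhds
    apply Tendsto.const_mul
    have h2 : Tendsto (fun s : ℝ => t - s) (nhds 0) (nhds t) := by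
      have := ((continuous_const (y := t)).sub continuous_id).tendsto (0:ℝ)
      simpa [Pi.sub_def] using this
    exact (Real.continuous_sqrt.tendsto t).comp h2
  have h3 : Tendsto (fun s => (Real.sqrt s)⁻¹) (nhdsWithin 0 (Set.Ioo 0 t)) atTop :=
    (sqrt_tendsto_zero ht).inv_tendsto_nhdsGT_zero
  have h4 := Filter.Tendsto.pos_mul_atTop (by positivity : 0 < a * Real.sqrt t) h1 h3
  apply h4.congr
  intro s
  ring

lemma term2_zero {t b : ℝ} (ht : 0 < t) :
    Tendsto (fun s => b * (Real.sqrt s/Real.sqrt (t-s))) (nhdsWithin 0 (Set.Ioo 0 t))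
      (nhds 0) := by
  apply tendsto_nhdsWithin_of_tendsto_nhds
  have h2 : Tendsto (fun s : ℝ => t - s) (nhds 0) (nhds t) := by
    have := ((continuous_const (y := t)).sub continuous_id).tendsto (0:ℝ)
    simpa [Pi.sub_def] using this
  have h3 : Tendsto (fun s => Real.sqrt s / Real.sqrt (t - s)) (nhds 0) (nhds 0) := by
    have hnum : Tendsto (fun s : ℝ => Real.sqrt s) (nhds 0) (nhds 0) := by
      simpa using Real.continuous_sqrt.tendsto 0
    have hden : Tendsto (fun s : ℝ => Real.sqrt (t-s)) (nhds 0) (nhds (Real.sqrt t)) :=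
      (Real.continuous_sqrt.tendsto t).comp h2
    have := hnum.div hden (by positivity : Real.sqrt t ≠ 0)
    simpa [Pi.div_def] using this
  have := h3.const_mul b
  simpa using this

lemma u_atTop {t a b : ℝ} (ht : 0 < t) (ha : 0 < a) (hb : 0 < b) :
    Tendsto (uF t a b) (nhdsWithin 0 (Set.Ioo 0 t)) atTop := by
  unfold uF
  apply Tendsto.atTop_div_const (Real.sqrt_pos.mpr ht)
  have := (((term2_zero (b := b) ht).neg).add_atTop (term1_atTop ht ha))
  apply this.congr
  intro s; ring

lemma w_atTop0 {t a b : ℝ} (ht : 0 < t) (ha : 0 < a) (hb : 0 < b) :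
    Tendsto (wF t a b) (nhdsWithin 0 (Set.Ioo 0 t)) atTop := by
  unfold wF
  apply Tendsto.atTop_div_const (Real.sqrt_pos.mpr ht)
  exact ((term2_zero (b := b) ht)).add_atTop (term1_atTop ht ha) |>.congr (fun s => by ring)

lemma term1'_zero {t a : ℝ} (ht : 0 < t) :
    Tendsto (fun s => a * (Real.sqrt (t-s)/Real.sqrt s)) (nhdsWithin t (Set.Ioo 0 t))
      (nhds 0) := by
  apply tendsto_nhdsWithin_of_tendsto_nhds
  have hnum : Tendsto (fun s : ℝ => Real.sqrt (t - s)) (nhds t) (nhds 0) := by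
    have h1 : Tendsto (fun s : ℝ => t - s) (nhds t) (nhds 0) := by
      have := ((continuous_const (y := t)).sub continuous_id).tendsto t
      simpa [Pi.sub_def] using this
    have := (Real.continuous_sqrt.tendsto 0).comp h1
    simpa [Function.comp_def] using this
  have hden : Tendsto (fun s : ℝ => Real.sqrt s) (nhds t) (nhds (Real.sqrt t)) :=
    Real.continuous_sqrt.tendsto t
  have := (hnum.div hden (by positivity : Real.sqrt t ≠ 0)).const_mul a
  simpa using this

lemma term2'_atTop {t b : ℝ} (ht : 0 < t) (hb : 0 < b) :
    Tendsto (fun s => b * (Real.sqrt s/Real.sqrt (t-s))) (nhdsWithin t (Set.Ioo 0 t)) atTop := by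
  have h1 : Tendsto (fun s => b * Real.sqrt s) (nhdsWithin t (Set.Ioo 0 t))
      (nhds (b * Real.sqrt t)) :=
    tendsto_nhdsWithin_of_tendsto_nhds ((Real.continuous_sqrt.tendsto t).const_mul b)
  have h3 : Tendsto (fun s => (Real.sqrt (t - s))⁻¹) (nhdsWithin t (Set.Ioo 0 t)) atTop :=
    (sqrt_ts_tendsto_zero ht).inv_tendsto_nhdsGT_zero
  have h4 := Filter.Tendsto.pos_mul_atTop (by positivity : 0 < b * Real.sqrt t) h1 h3
  exact h4.congr (fun s => by ring)

lemma u_atBot {t a b : ℝ} (ht : 0 < t) (ha : 0 < a) (hb : 0 < b) :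
    Tendsto (uF t a b) (nhdsWithin t (Set.Ioo 0 t)) atBot := by
  unfold uF
  apply Tendsto.atBot_div_const (Real.sqrt_pos.mpr ht)
  have hneg : Tendsto (fun s => -(b * (Real.sqrt s/Real.sqrt (t-s))))
      (nhdsWithin t (Set.Ioo 0 t)) atBot :=
    tendsto_neg_atTop_atBot.comp (term2'_atTop ht hb)
  exact ((term1'_zero (a := a) ht).add_atBot hneg).congr (fun s => by ring)

lemma w_atTopt {t a b : ℝ} (ht : 0 < t) (ha : 0 < a) (hb : 0 < b) :
    Tendsto (wF t a b) (nhdsWithin t (Set.Ioo 0 t)) atTop := by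
  unfold wF
  apply Tendsto.atTop_div_const (Real.sqrt_pos.mpr ht)
  exact (term1'_zero (a := a) ht).add_atTop (term2'_atTop ht hb)

lemma uderiv_pos {t a b s : ℝ} (ht : 0 < t) (ha : 0 < a) (hb : 0 < b)
    (h0 : 0 < s) (hst : s < t) :
    0 < a/(s * Real.sqrt s * Real.sqrt (t-s)) + b/(Real.sqrt s * (t-s) * Real.sqrt (t-s)) := by
  have h1 : 0 < Real.sqrt s := Real.sqrt_pos.mpr h0
  have h2 : 0 < Real.sqrt (t-s) := Real.sqrt_pos.mpr (by linarith)
  have h3 : 0 < t - s := by linarith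
  positivity

lemma u_anti {t a b : ℝ} (ht : 0 < t) (ha : 0 < a) (hb : 0 < b) :
    StrictAntiOn (uF t a b) (Set.Ioo 0 t) := by
  apply strictAntiOn_of_deriv_neg (convex_Ioo 0 t)
  · exact fun s hs => (hasDerivAt_u hs.1 hs.2).continuousAt.continuousWithinAt
  · intro s hs
    rw [interior_Ioo] at hs
    rw [(hasDerivAt_u hs.1 hs.2).deriv]
    have := uderiv_pos ht ha hb hs.1 hs.2
    have h4 : 0 < Real.sqrt t := Real.sqrt_pos.mpr ht
    nlinarith

lemma u_image {t a b : ℝ} (ht : 0 < t) (ha : 0 < a) (hb : 0 < b) :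
    uF t a b '' (Set.Ioo 0 t) = Set.univ := by
  haveI h0 : (nhdsWithin (0:ℝ) (Set.Ioo 0 t)).NeBot := by
    rw [← mem_closure_iff_nhdsWithin_neBot, closure_Ioo ht.ne]
    exact ⟨le_rfl, ht.le⟩
  haveI ht' : (nhdsWithin t (Set.Ioo 0 t)).NeBot := by
    rw [← mem_closure_iff_nhdsWithin_neBot, closure_Ioo ht.ne]
    exact ⟨ht.le, le_rfl⟩
  apply Set.eq_univ_of_forall
  intro v
  obtain ⟨s₁, hv1, hm1⟩ :=
    (((u_atTop ht ha hb).eventually_gt_atTop v).and self_mem_nhdsWithin).exists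
  obtain ⟨s₂, hv2, hm2⟩ :=
    (((u_atBot ht ha hb).eventually_lt_atBot v).and self_mem_nhdsWithin).exists
  have h12 : s₁ < s₂ := by
    rcases lt_trichotomy s₁ s₂ with h | h | h
    · exact h
    · exfalso; rw [h] at hv1; linarith
    · exfalso
      have := u_anti ht ha hb hm2 hm1 h
      linarith
  have hsub : Set.Icc s₁ s₂ ⊆ Set.Ioo 0 t :=
    fun z hz => ⟨lt_of_lt_of_le hm1.1 hz.1, lt_of_le_of_lt hz.2 hm2.2⟩
  have hcont : ContinuousOn (uF t a b) (Set.Icc s₁ s₂) :=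
    fun z hz => (hasDerivAt_u (hsub hz).1 (hsub hz).2).continuousAt.continuousWithinAt
  have := intermediate_value_Icc' h12.le hcont
  have hv : v ∈ Set.Icc (uF t a b s₂) (uF t a b s₁) := ⟨hv2.le, hv1.le⟩
  obtain ⟨z, hz, hzv⟩ := this hv
  exact ⟨z, hsub hz, hzv⟩

lemma keyP {t a b : ℝ} (ht : 0 < t) (ha : 0 < a) (hb : 0 < b) :
    IntegrableOn (fun s => a/(s * Real.sqrt s * Real.sqrt (t-s))
        * Real.exp (-(a^2/s + b^2/(t-s))/2)) (Set.Ioo 0 t) ∧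
      ∫ s in Set.Ioo 0 t, a/(s * Real.sqrt s * Real.sqrt (t-s))
        * Real.exp (-(a^2/s + b^2/(t-s))/2)
        = Real.sqrt (2*Real.pi) / Real.sqrt t * Real.exp (-(a+b)^2/(2*t)) := by
  have hsq : 0 < Real.sqrt t := Real.sqrt_pos.mpr ht
  set S : Set ℝ := Set.Ioo (0:ℝ) t with hS
  set g : ℝ → ℝ := fun v => Real.exp (-v^2/2) with hgdef
  set E : ℝ → ℝ := fun s => Real.exp (-(a^2/s + b^2/(t-s))/2) with hEdef
  set P : ℝ → ℝ := fun s => a/(s * Real.sqrt s * Real.sqrt (t-s)) * E s with hPdef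
  set Q : ℝ → ℝ := fun s => b/(Real.sqrt s * (t-s) * Real.sqrt (t-s)) * E s with hQdef
  set u' : ℝ → ℝ := fun s => -(Real.sqrt t/2) * (a/(s * Real.sqrt s * Real.sqrt (t-s))
      + b/(Real.sqrt s * (t-s) * Real.sqrt (t-s))) with hu'def
  set w' : ℝ → ℝ := fun s => (Real.sqrt t/2) * (-(a/(s * Real.sqrt s * Real.sqrt (t-s)))
      + b/(Real.sqrt s * (t-s) * Real.sqrt (t-s))) with hw'def
  have hgeq : (fun v : ℝ => Real.exp (-(1/2) * v^2)) = g := by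
    funext v; rw [hgdef]; congr 1; ring
  have hg : Integrable g := by
    rw [← hgeq]; exact integrable_exp_neg_mul_sq (by norm_num)
  have hgval : ∫ v, g v = Real.sqrt (2*π) := by
    rw [← hgeq, integral_gaussian]
    norm_num
    ring
  have hgc : Continuous g := by
    rw [hgdef]; fun_prop
  have hden1 : ∀ s ∈ S, 0 < s * Real.sqrt s * Real.sqrt (t-s) := by
    intro s hs
    have h1 : 0 < Real.sqrt s := Real.sqrt_pos.mpr hs.1
    have h2 : 0 < Real.sqrt (t-s) := Real.sqrt_pos.mpr (by linarith [hs.2])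
    have := hs.1
    positivity
  have hden2 : ∀ s ∈ S, 0 < Real.sqrt s * (t-s) * Real.sqrt (t-s) := by
    intro s hs
    have h1 : 0 < Real.sqrt s := Real.sqrt_pos.mpr hs.1
    have h2 : 0 < Real.sqrt (t-s) := Real.sqrt_pos.mpr (by linarith [hs.2])
    have h3 : 0 < t - s := by linarith [hs.2]
    positivity
  have hPpos : ∀ s ∈ S, 0 < P s := by
    intro s hs
    rw [hPdef]
    exact mul_pos (div_pos ha (hden1 s hs)) (Real.exp_pos _)
  have hQpos : ∀ s ∈ S, 0 < Q s := by
    intro s hs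
    rw [hQdef]
    exact mul_pos (div_pos hb (hden2 s hs)) (Real.exp_pos _)
  have hEc : ContinuousOn E S := by
    apply Real.continuous_exp.comp_continuousOn
    apply ContinuousOn.div_const
    apply ContinuousOn.neg
    apply ContinuousOn.add
    · exact continuousOn_const.div continuousOn_id (fun s hs => ne_of_gt hs.1)
    · exact continuousOn_const.div (continuousOn_const.sub continuousOn_id)
        (fun s hs => ne_of_gt (by linarith [hs.2] : (0:ℝ) < t - s))
  have hsqc : ContinuousOn (fun s : ℝ => s * Real.sqrt s * Real.sqrt (t-s)) S := by
    fun_prop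
  have hsqc2 : ContinuousOn (fun s : ℝ => Real.sqrt s * (t-s) * Real.sqrt (t-s)) S := by
    fun_prop
  have hPc : ContinuousOn P S := by
    rw [hPdef]
    exact (continuousOn_const.div hsqc (fun s hs => ne_of_gt (hden1 s hs))).mul hEc
  have hQc : ContinuousOn Q S := by
    rw [hQdef]
    exact (continuousOn_const.div hsqc2 (fun s hs => ne_of_gt (hden2 s hs))).mul hEc
  have hderivW : ∀ x ∈ S, HasDerivWithinAt (uF t a b) (u' x) S x :=
    fun x hx => (hasDerivAt_u hx.1 hx.2).hasDerivWithinAt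
  have hInj : Set.InjOn (uF t a b) S := (u_anti ht ha hb).injOn
  have himg : ∫ v in uF t a b '' S, g v = ∫ s in S, |u' s| • g (uF t a b s) :=
    integral_image_eq_integral_abs_deriv_smul measurableSet_Ioo hderivW hInj g
  have himgval : ∫ s in S, |u' s| • g (uF t a b s) = Real.sqrt (2*π) := by
    rw [← himg, u_image ht ha hb, MeasureTheory.setIntegral_univ, hgval]
  have hInt1 : IntegrableOn (fun s => |u' s| • g (uF t a b s)) S :=
    (integrableOn_image_iff_integrableOn_abs_deriv_smul measurableSet_Ioo hderivW hInj g).mp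
      (by rw [u_image ht ha hb]; exact hg.integrableOn)
  have hEu : ∀ s ∈ S, E s = g (uF t a b s) * Real.exp (-(a+b)^2/(2*t)) := by
    intro s hs
    simp only [hEdef, hgdef]
    rw [show -(a^2/s + b^2/(t-s))/2 = -(uF t a b s)^2/2 + -((a+b)^2/(2*t)) by
      linarith [exp_id_u (a := a) (b := b) hs.1 hs.2], Real.exp_add]
    ring_nf
  have hEw : ∀ s ∈ S, E s = g (wF t a b s) * Real.exp (-(a-b)^2/(2*t)) := by
    intro s hs
    simp only [hEdef, hgdef]
    rw [show -(a^2/s + b^2/(t-s))/2 = -(wF t a b s)^2/2 + -((a-b)^2/(2*t)) by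
      linarith [exp_id_w (a := a) (b := b) hs.1 hs.2], Real.exp_add]
    ring_nf
  have habs : ∀ s ∈ S, |u' s| = (Real.sqrt t/2) * (a/(s * Real.sqrt s * Real.sqrt (t-s))
      + b/(Real.sqrt s * (t-s) * Real.sqrt (t-s))) := by
    intro s hs
    simp only [hu'def]
    rw [show -(Real.sqrt t/2) * (a/(s * Real.sqrt s * Real.sqrt (t-s))
        + b/(Real.sqrt s * (t-s) * Real.sqrt (t-s)))
      = -((Real.sqrt t/2) * (a/(s * Real.sqrt s * Real.sqrt (t-s))
        + b/(Real.sqrt s * (t-s) * Real.sqrt (t-s)))) by ring, abs_neg]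
    apply abs_of_pos
    apply mul_pos (by positivity)
    exact add_pos (div_pos ha (hden1 s hs)) (div_pos hb (hden2 s hs))
  have hPQ : ∀ s ∈ S, P s + Q s
      = ((2/Real.sqrt t) * Real.exp (-(a+b)^2/(2*t))) * (|u' s| • g (uF t a b s)) := by
    intro s hs
    simp only [hPdef, hQdef]
    rw [hEu s hs, smul_eq_mul, habs s hs]
    field_simp
  have hPQint2 : IntegrableOn (fun s => P s + Q s) S := by
    apply IntegrableOn.congr_fun (hInt1.const_mul ((2/Real.sqrt t) * Real.exp (-(a+b)^2/(2*t))))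
      _ measurableSet_Ioo
    intro s hs
    exact (hPQ s hs).symm
  have hPQval : ∫ s in S, (P s + Q s)
      = (2/Real.sqrt t) * Real.exp (-(a+b)^2/(2*t)) * Real.sqrt (2*π) := by
    rw [MeasureTheory.setIntegral_congr_fun measurableSet_Ioo hPQ,
      MeasureTheory.integral_const_mul, himgval]
  have hPint : IntegrableOn P S := by
    apply Integrable.mono' hPQint2 (hPc.aestronglyMeasurable measurableSet_Ioo)
    rw [ae_restrict_iff' measurableSet_Ioo]
    filter_upwards with s hs
    rw [Real.norm_eq_abs, abs_of_pos (hPpos s hs)]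
    linarith [hQpos s hs]
  have hQint : IntegrableOn Q S := by
    apply Integrable.mono' hPQint2 (hQc.aestronglyMeasurable measurableSet_Ioo)
    rw [ae_restrict_iff' measurableSet_Ioo]
    filter_upwards with s hs
    rw [Real.norm_eq_abs, abs_of_pos (hQpos s hs)]
    linarith [hPpos s hs]
  set Φ : ℝ → ℝ := fun v => ∫ r in (0:ℝ)..v, g r with hΦdef
  have hΦd : ∀ v : ℝ, HasDerivAt Φ (g v) v := by
    intro v
    exact intervalIntegral.integral_hasDerivAt_right (hgc.intervalIntegrable _ _)
      (hgc.stronglyMeasurableAtFilter _ _) hgc.continuousAt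
  set L : ℝ := ∫ r in Set.Ioi (0:ℝ), g r with hLdef
  have hΦtop : Tendsto Φ atTop (nhds L) :=
    intervalIntegral_tendsto_integral_Ioi 0 hg.integrableOn tendsto_id
  have hcomp : ∀ s ∈ S, HasDerivAt (fun r => Φ (wF t a b r)) (g (wF t a b s) * w' s) s :=
    fun s hs => (hΦd (wF t a b s)).comp s (hasDerivAt_w hs.1 hs.2)
  have hptw : ∀ s ∈ S, g (wF t a b s) * w' s
      = (-(Real.sqrt t)/2 * Real.exp ((a-b)^2/(2*t))) * (P s - Q s) := by
    intro s hs
    simp only [hPdef, hQdef, hw'def]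
    rw [hEw s hs]
    have hgw : g (wF t a b s) = Real.exp (-(wF t a b s)^2/2) := rfl
    have hmul : Real.exp ((a-b)^2/(2*t)) * Real.exp (-(a-b)^2/(2*t)) = 1 := by
      rw [← Real.exp_add]
      ring_nf
      exact Real.exp_zero
    linear_combination (Real.sqrt t/2 * (a / (s*Real.sqrt s*Real.sqrt (t-s))
      - b / (Real.sqrt s*(t-s)*Real.sqrt (t-s))) * g (wF t a b s)) * hmul
  have hc : (-(Real.sqrt t)/2 * Real.exp ((a-b)^2/(2*t))) ≠ 0 :=
    mul_ne_zero (div_ne_zero (neg_ne_zero.mpr hsq.ne') two_ne_zero) (Real.exp_ne_zero _)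
  have hD'int : IntegrableOn (fun s => g (wF t a b s) * w' s) S := by
    apply IntegrableOn.congr_fun
      (((hPint.sub hQint).const_mul (-(Real.sqrt t)/2 * Real.exp ((a-b)^2/(2*t)))))
      _ measurableSet_Ioo
    intro s hs
    exact (hptw s hs).symm
  have hFTC : ∫ s in S, g (wF t a b s) * w' s = L - L :=
    my_integral_Ioo_of_hasDerivAt_of_tendsto ht hcomp hD'int
      (hΦtop.comp (w_atTop0 ht ha hb)) (hΦtop.comp (w_atTopt ht ha hb))
  rw [sub_self] at hFTC
  have hPQ0 : ∫ s in S, (P s - Q s) = 0 := by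
    have h1 : ∫ s in S, g (wF t a b s) * w' s
        = (-(Real.sqrt t)/2 * Real.exp ((a-b)^2/(2*t))) * ∫ s in S, (P s - Q s) := by
      rw [MeasureTheory.setIntegral_congr_fun measurableSet_Ioo hptw, MeasureTheory.integral_const_mul]
    rw [hFTC] at h1
    exact ((mul_eq_zero.mp h1.symm).resolve_left hc)
  have hsum : ∫ s in S, (P s + Q s) = (∫ s in S, P s) + ∫ s in S, Q s :=
    integral_add hPint hQint
  have hdiff : ∫ s in S, (P s - Q s) = (∫ s in S, P s) - ∫ s in S, Q s :=
    integral_sub hPint hQint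
  refine ⟨hPint, ?_⟩
  show ∫ s in S, P s = Real.sqrt (2*Real.pi) / Real.sqrt t * Real.exp (-(a+b)^2/(2*t))
  have h2 : (2:ℝ) * ∫ s in S, P s
      = (2/Real.sqrt t) * Real.exp (-(a+b)^2/(2*t)) * Real.sqrt (2*π) := by
    rw [hsum] at hPQval
    rw [hdiff] at hPQ0
    linarith [hPQval, hPQ0]
  have h3 : ∫ s in S, P s = (1/Real.sqrt t) * Real.exp (-(a+b)^2/(2*t)) * Real.sqrt (2*π) := by
    field_simp at h2 ⊢
    linarith
  rw [h3]
  ring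

end HuntAux

theorem hunt_correction_half (t x y : ℝ) (ht : 0 < t) (hx : 1 < x) (hy : 1 < y) :
    ∫ s in (0:ℝ)..t,
        ((x - 1)/x) * (2 * Real.pi * s^3) ^ (-(1/2) : ℝ) * Real.exp (-(x-1)^2/(2*s)) *
          ((2 * Real.pi * (t - s)) ^ (-(1/2) : ℝ) * y *
            (Real.exp (-(1-y)^2/(2*(t-s))) - Real.exp (-(1+y)^2/(2*(t-s)))))
      = (2 * Real.pi * t) ^ (-(1/2) : ℝ) * (y/x) *
          (Real.exp (-(x+y-2)^2/(2*t)) - Real.exp (-(x+y)^2/(2*t))) := by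
  have hx1 : 0 < x - 1 := by linarith
  have hy1 : 0 < y - 1 := by linarith
  have hy2 : 0 < y + 1 := by linarith
  have hx0 : (0:ℝ) < x := by linarith
  have hπ : 0 < Real.sqrt (2*π) := Real.sqrt_pos.mpr (by positivity)
  have hts : 0 < Real.sqrt t := Real.sqrt_pos.mpr ht
  obtain ⟨hint1, hval1⟩ := keyP (a := x - 1) (b := y - 1) ht hx1 hy1
  obtain ⟨hint2, hval2⟩ := keyP (a := x - 1) (b := y + 1) ht hx1 hy2
  rw [intervalIntegral.integral_of_le ht.le, MeasureTheory.integral_Ioc_eq_integral_Ioo]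
  have hcongr : ∀ s ∈ Set.Ioo (0:ℝ) t,
      ((x - 1)/x) * (2 * Real.pi * s^3) ^ (-(1/2) : ℝ) * Real.exp (-(x-1)^2/(2*s)) *
          ((2 * Real.pi * (t - s)) ^ (-(1/2) : ℝ) * y *
            (Real.exp (-(1-y)^2/(2*(t-s))) - Real.exp (-(1+y)^2/(2*(t-s)))))
        = (y/x * ((Real.sqrt (2*π))⁻¹ * (Real.sqrt (2*π))⁻¹)) *
            ((x-1)/(s * Real.sqrt s * Real.sqrt (t-s))
                * Real.exp (-((x-1)^2/s + (y-1)^2/(t-s))/2)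
              - (x-1)/(s * Real.sqrt s * Real.sqrt (t-s))
                * Real.exp (-((x-1)^2/s + (y+1)^2/(t-s))/2)) := by
    intro s hs
    obtain ⟨h0, hst⟩ := hs
    have hts0 : 0 < t - s := by linarith
    have hσ : 0 < Real.sqrt s := Real.sqrt_pos.mpr h0
    have hτ : 0 < Real.sqrt (t-s) := Real.sqrt_pos.mpr hts0
    have hA : ((2*Real.pi*s^3:ℝ)) ^ (-(1/2):ℝ)
        = (Real.sqrt (2*Real.pi))⁻¹ * (s * Real.sqrt s)⁻¹ := by
      have h1 : Real.sqrt (2*Real.pi*s^3) = Real.sqrt (2*Real.pi) * (s * Real.sqrt s) := by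
        rw [Real.sqrt_mul (by positivity) (s^3)]
        congr 1
        rw [show s^3 = s^2 * s by ring, Real.sqrt_mul (sq_nonneg s) s, Real.sqrt_sq h0.le]
      rw [Real.rpow_neg (by positivity), ← Real.sqrt_eq_rpow, h1, mul_inv]
    have hB : ((2*Real.pi*(t-s):ℝ)) ^ (-(1/2):ℝ)
        = (Real.sqrt (2*Real.pi))⁻¹ * (Real.sqrt (t-s))⁻¹ := by
      rw [Real.rpow_neg (by positivity), ← Real.sqrt_eq_rpow,
        Real.sqrt_mul (by positivity) (t-s), mul_inv]
    have e1 : Real.exp (-((x-1)^2/s + (y-1)^2/(t-s))/2)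
        = Real.exp (-(x-1)^2/(2*s)) * Real.exp (-(1-y)^2/(2*(t-s))) := by
      rw [← Real.exp_add]
      congr 1
      rw [show ((1-y):ℝ)^2 = (y-1)^2 by ring]
      field_simp
      ring
    have e2 : Real.exp (-((x-1)^2/s + (y+1)^2/(t-s))/2)
        = Real.exp (-(x-1)^2/(2*s)) * Real.exp (-(1+y)^2/(2*(t-s))) := by
      rw [← Real.exp_add]
      congr 1
      rw [show ((1+y):ℝ)^2 = (y+1)^2 by ring]
      field_simp
      ring
    rw [hA, hB, e1, e2]
    field_simp
  rw [MeasureTheory.setIntegral_congr_fun measurableSet_Ioo hcongr, MeasureTheory.integral_const_mul,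
    integral_sub hint1 hint2, hval1, hval2,
    show ((x-1) + (y-1) : ℝ) = x + y - 2 by ring, show ((x-1) + (y+1) : ℝ) = x + y by ring]
  have hrp : ((2*Real.pi*t:ℝ)) ^ (-(1/2):ℝ) = (Real.sqrt (2*Real.pi))⁻¹ * (Real.sqrt t)⁻¹ := by
    rw [Real.rpow_neg (by positivity), ← Real.sqrt_eq_rpow,
      Real.sqrt_mul (by positivity) t, mul_inv]
  rw [hrp]
  field_simp
end

section
/- Let I_μ be the modified Bessel function of the first kind with μ > -1/2. Then for all 0 < x ≤ y, I_μ(y)/I_μ(x) ≤ (y/x)^μ · e^{y-x}. -/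
open Real Finset Filter

noncomputable def besselI (μ z : ℝ) : ℝ :=
  ∑' k : ℕ, (z / 2) ^ (μ + 2 * (k : ℝ)) / ((Nat.factorial k : ℝ) * Real.Gamma ((k : ℝ) + μ + 1))


noncomputable def bc (μ : ℝ) (k : ℕ) : ℝ :=
  1 / (4 ^ k * (Nat.factorial k : ℝ) * Real.Gamma ((k : ℝ) + μ + 1))

noncomputable def ec (μ : ℝ) (k : ℕ) : ℝ := (Nat.factorial (2 * k) : ℝ) * bc μ k

noncomputable def gg (k : ℕ) (z : ℝ) : ℝ :=
  match k with
  | 0 => 1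
  | (m+1) => z ^ (2*m+2) / (Nat.factorial (2*m+2) : ℝ) - z ^ (2*m+1) / (Nat.factorial (2*m+1) : ℝ)

lemma gamma_pos (μ : ℝ) (hμ : -(1/2) < μ) (k : ℕ) : 0 < Real.Gamma ((k : ℝ) + μ + 1) := by
  apply Real.Gamma_pos_of_pos
  have : (0:ℝ) ≤ k := Nat.cast_nonneg k
  linarith

lemma bc_pos (μ : ℝ) (hμ : -(1/2) < μ) (k : ℕ) : 0 < bc μ k := by
  have h1 := gamma_pos μ hμ k
  have h2 : (0:ℝ) < (Nat.factorial k : ℝ) := by positivity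
  unfold bc; positivity

lemma bc_succ (μ : ℝ) (hμ : -(1/2) < μ) (k : ℕ) :
    bc μ (k+1) = bc μ k / (4 * ((k:ℝ)+1) * ((k:ℝ) + μ + 1)) := by
  have hΓ := gamma_pos μ hμ k
  have hne : ((k:ℝ) + μ + 1) ≠ 0 := ne_of_gt (by have : (0:ℝ) ≤ k := Nat.cast_nonneg k; linarith)
  have hg : Real.Gamma (((k:ℕ)+1 : ℕ) + μ + 1) = ((k:ℝ) + μ + 1) * Real.Gamma ((k:ℝ) + μ + 1) := by
    push_cast
    rw [show (k:ℝ) + 1 + μ + 1 = ((k:ℝ) + μ + 1) + 1 by ring, Real.Gamma_add_one hne]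
  unfold bc
  rw [hg]
  have hf : (Nat.factorial (k+1) : ℝ) = ((k:ℝ)+1) * (Nat.factorial k : ℝ) := by
    rw [Nat.factorial_succ]; push_cast; ring
  rw [hf]
  have h2 : (0:ℝ) < (Nat.factorial k : ℝ) := by positivity
  have h4 : (0:ℝ) < 4 ^ k := by positivity
  have h5 : (0:ℝ) < (k:ℝ) + 1 := by positivity
  field_simp
  ring

lemma ec_mono (μ : ℝ) (hμ : -(1/2) < μ) (k : ℕ) : ec μ (k+1) ≤ ec μ k := by
  have hb := bc_pos μ hμ k
  have hne : (0:ℝ) < (k:ℝ) + μ + 1 := by have : (0:ℝ) ≤ k := Nat.cast_nonneg k; linarith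
  unfold ec
  rw [bc_succ μ hμ k]
  have hfac : (Nat.factorial (2*(k+1)) : ℝ) = ((2*(k:ℝ)+2) * (2*(k:ℝ)+1)) * (Nat.factorial (2*k) : ℝ) := by
    have : 2*(k+1) = (2*k+1)+1 := by omega
    rw [this, Nat.factorial_succ, Nat.factorial_succ]
    push_cast; ring
  rw [hfac]
  rw [div_eq_mul_inv, ← mul_assoc]
  have key : ((2*(k:ℝ)+2) * (2*(k:ℝ)+1)) * (4 * ((k:ℝ)+1) * ((k:ℝ) + μ + 1))⁻¹ ≤ 1 := by
    rw [mul_inv_le_iff₀ (by positivity), one_mul]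
    nlinarith
  calc (2*(k:ℝ)+2) * (2*(k:ℝ)+1) * (Nat.factorial (2*k) : ℝ) * bc μ k * (4 * ((k:ℝ)+1) * ((k:ℝ) + μ + 1))⁻¹
      = ((2*(k:ℝ)+2) * (2*(k:ℝ)+1) * (4 * ((k:ℝ)+1) * ((k:ℝ) + μ + 1))⁻¹) * ((Nat.factorial (2*k) : ℝ) * bc μ k) := by ring
    _ ≤ 1 * ((Nat.factorial (2*k) : ℝ) * bc μ k) := by
        apply mul_le_mul_of_nonneg_right key
        positivity
    _ = (Nat.factorial (2*k) : ℝ) * bc μ k := by ring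


lemma gg_zero (k : ℕ) : gg k 0 = if k = 0 then 1 else 0 := by
  match k with
  | 0 => simp [gg]
  | (m+1) => simp [gg]

lemma hasDerivAt_gg (m : ℕ) (z : ℝ) :
    HasDerivAt (gg (m+1)) (z ^ (2*m+1) / (Nat.factorial (2*m+1) : ℝ)
      - z ^ (2*m) / (Nat.factorial (2*m) : ℝ)) z := by
  have h1 : HasDerivAt (fun w : ℝ => w ^ (2*m+2) / (Nat.factorial (2*m+2) : ℝ))
      (z ^ (2*m+1) / (Nat.factorial (2*m+1) : ℝ)) z := by
    have := (hasDerivAt_pow (2*m+2) z).div_const (Nat.factorial (2*m+2) : ℝ)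
    refine this.congr_deriv ?_
    have hfac : (Nat.factorial (2*m+2) : ℝ) = ((2*m+2 : ℕ) : ℝ) * (Nat.factorial (2*m+1) : ℝ) := by
      rw [show 2*m+2 = (2*m+1)+1 by omega, Nat.factorial_succ]; push_cast; ring
    rw [hfac]
    have hne : (Nat.factorial (2*m+1) : ℝ) ≠ 0 := by positivity
    have : 2*m+2-1 = 2*m+1 := by omega
    rw [this]
    field_simp
  have h2 : HasDerivAt (fun w : ℝ => w ^ (2*m+1) / (Nat.factorial (2*m+1) : ℝ))
      (z ^ (2*m) / (Nat.factorial (2*m) : ℝ)) z := by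
    have := (hasDerivAt_pow (2*m+1) z).div_const (Nat.factorial (2*m+1) : ℝ)
    refine this.congr_deriv ?_
    have hfac : (Nat.factorial (2*m+1) : ℝ) = ((2*m+1 : ℕ) : ℝ) * (Nat.factorial (2*m) : ℝ) := by
      rw [Nat.factorial_succ]; push_cast; ring
    rw [hfac]
    have hne : (Nat.factorial (2*m) : ℝ) ≠ 0 := by positivity
    have hne2 : ((2*m+1 : ℕ) : ℝ) ≠ 0 := by positivity
    have : 2*m+1-1 = 2*m := by omega
    rw [this]
    push_cast
    field_simp
  exact (h1.sub h2 : _)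

lemma hasDerivAt_psi (M : ℕ) (z : ℝ) :
    HasDerivAt (fun w => Real.exp w * ∑ k ∈ range (M+1), gg k w)
      (Real.exp z * (z ^ (2*M) / (Nat.factorial (2*M) : ℝ))) z := by
  induction M with
  | zero =>
    have : (fun w => Real.exp w * ∑ k ∈ range 1, gg k w) = fun w => Real.exp w := by
      funext w; simp [gg]
    rw [this]
    simpa using Real.hasDerivAt_exp z
  | succ M ih =>
    have hsplit : (fun w => Real.exp w * ∑ k ∈ range (M+2), gg k w)
        = fun w => (Real.exp w * ∑ k ∈ range (M+1), gg k w) + Real.exp w * gg (M+1) w := by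
      funext w; rw [Finset.sum_range_succ]; ring
    rw [hsplit]
    have hg := hasDerivAt_gg M z
    have he := Real.hasDerivAt_exp z
    have hmul := he.mul hg
    have := ih.add hmul
    refine this.congr_deriv ?_
    symm
    show Real.exp z * (z ^ (2*(M+1)) / (Nat.factorial (2*(M+1)) : ℝ)) = _
    have h1 : 2*(M+1) = 2*M+2 := by omega
    rw [h1]
    simp only [gg]
    ring

lemma sum_gg_nonneg (N : ℕ) (z : ℝ) (hz : 0 ≤ z) : 0 ≤ ∑ k ∈ range N, gg k z := by
  match N with
  | 0 => simp
  | (M+1) =>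
    set ψ := fun w => Real.exp w * ∑ k ∈ range (M+1), gg k w with hψ
    have hmono : Monotone ψ := by
      apply monotone_of_deriv_nonneg
      · intro w; exact (hasDerivAt_psi M w).differentiableAt
      · intro w
        rw [(hasDerivAt_psi M w).deriv]
        have : 0 ≤ w ^ (2*M) := by
          rw [pow_mul]; positivity
        positivity
    have h0 : ψ 0 = 1 := by
      rw [hψ]
      simp only []
      rw [Real.exp_zero, one_mul]
      rw [Finset.sum_eq_single 0]
      · simp [gg]
      · intro b _ hb; rw [gg_zero]; simp [hb]
      · intro h; simp at h
    have h1 : (1:ℝ) ≤ ψ z := by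
      rw [← h0]; exact hmono hz
    have hexp : 0 < Real.exp z := Real.exp_pos z
    have : 0 < Real.exp z * ∑ k ∈ range (M+1), gg k z := lt_of_lt_of_le one_pos h1
    nlinarith


lemma ec_nonneg (μ : ℝ) (hμ : -(1/2) < μ) (k : ℕ) : 0 ≤ ec μ k := by
  have := bc_pos μ hμ k; unfold ec; positivity

lemma abel_ge (μ : ℝ) (hμ : -(1/2) < μ) (z : ℝ) (hz : 0 ≤ z) (N : ℕ) :
    ec μ N * (∑ k ∈ range N, gg k z) ≤ ∑ k ∈ range N, ec μ k * gg k z := by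
  induction N with
  | zero => simp
  | succ N ih =>
    rw [Finset.sum_range_succ, Finset.sum_range_succ (f := fun k => ec μ k * gg k z)]
    have h1 : ec μ (N+1) * (∑ k ∈ range N, gg k z + gg N z)
        ≤ ec μ N * (∑ k ∈ range N, gg k z + gg N z) := by
      apply mul_le_mul_of_nonneg_right (ec_mono μ hμ N)
      have := sum_gg_nonneg (N+1) z hz
      rwa [Finset.sum_range_succ] at this
    calc ec μ (N+1) * (∑ k ∈ range N, gg k z + gg N z)
        ≤ ec μ N * (∑ k ∈ range N, gg k z + gg N z) := h1
      _ = ec μ N * (∑ k ∈ range N, gg k z) + ec μ N * gg N z := by ring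
      _ ≤ ∑ k ∈ range N, ec μ k * gg k z + ec μ N * gg N z := by linarith

lemma S_nonneg (μ : ℝ) (hμ : -(1/2) < μ) (z : ℝ) (hz : 0 ≤ z) (N : ℕ) :
    0 ≤ ∑ k ∈ range N, ec μ k * gg k z := by
  have h1 := abel_ge μ hμ z hz N
  have h2 := sum_gg_nonneg N z hz
  have h3 := ec_nonneg μ hμ N
  nlinarith

lemma term_eq (μ : ℝ) (k : ℕ) (z : ℝ) :
    ec μ k * gg k z = bc μ k * z^(2*k) - bc μ k * (((2*k : ℕ) : ℝ) * z^(2*k-1)) := by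
  match k with
  | 0 => simp [ec, gg]
  | (m+1) =>
    show (Nat.factorial (2*(m+1)) : ℝ) * bc μ (m+1) *
        (z ^ (2*m+2) / (Nat.factorial (2*m+2) : ℝ) - z ^ (2*m+1) / (Nat.factorial (2*m+1) : ℝ)) = _
    have h1 : 2*(m+1) = 2*m+2 := by omega
    have h2 : 2*m+2-1 = 2*m+1 := by omega
    rw [h1]; rw [h2]
    have hfac : (Nat.factorial (2*m+2) : ℝ) = ((2*m+2 : ℕ) : ℝ) * (Nat.factorial (2*m+1) : ℝ) := by
      rw [show 2*m+2 = (2*m+1)+1 by omega, Nat.factorial_succ]; push_cast; ring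
    have hne1 : (Nat.factorial (2*m+1) : ℝ) ≠ 0 := by positivity
    have hne2 : (Nat.factorial (2*m+2) : ℝ) ≠ 0 := by positivity
    rw [hfac]
    push_cast
    field_simp

lemma deriv_le_sum (μ : ℝ) (hμ : -(1/2) < μ) (z : ℝ) (hz : 0 ≤ z) (N : ℕ) :
    ∑ k ∈ range N, bc μ k * (((2*k : ℕ) : ℝ) * z^(2*k-1)) ≤ ∑ k ∈ range N, bc μ k * z^(2*k) := by
  have h := S_nonneg μ hμ z hz N
  have he : ∑ k ∈ range N, ec μ k * gg k z
      = ∑ k ∈ range N, (bc μ k * z^(2*k) - bc μ k * (((2*k : ℕ) : ℝ) * z^(2*k-1))) := by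
    apply Finset.sum_congr rfl; intro k _; exact term_eq μ k z
  rw [he, Finset.sum_sub_distrib] at h
  linarith

lemma summable_f (μ : ℝ) (hμ : -(1/2) < μ) (z : ℝ) :
    Summable (fun k => bc μ k * z ^ (2*k)) := by
  apply summable_of_ratio_norm_eventually_le (r := 1/2) (by norm_num)
  filter_upwards [eventually_ge_atTop ⌈z^2⌉₊] with k hk
  have hb := bc_pos μ hμ k
  have hb1 := bc_pos μ hμ (k+1)
  have hknn : (0:ℝ) ≤ k := Nat.cast_nonneg k
  have hμ1 : (0:ℝ) < (k:ℝ) + μ + 1 := by linarith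
  have hzk : z^2 ≤ (k:ℝ) := le_trans (Nat.le_ceil _) (by exact_mod_cast hk)
  have key : bc μ (k+1) * z ^ (2*(k+1)) ≤ (1/2) * (bc μ k * z ^ (2*k)) := by
    rw [bc_succ μ hμ k]
    have hpow : z ^ (2*(k+1)) = z^(2*k) * z^2 := by rw [show 2*(k+1) = 2*k+2 by omega, pow_add]
    rw [hpow]
    have hz2 : (0:ℝ) ≤ z^2 := sq_nonneg z
    have hzz : (0:ℝ) ≤ z^(2*k) := by rw [pow_mul]; positivity
    rw [div_mul_eq_mul_div, div_le_iff₀ (by positivity)]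
    have h2 : z^2 ≤ 2 * (((k:ℝ)+1) * ((k:ℝ)+μ+1)) := by nlinarith
    nlinarith [mul_le_mul_of_nonneg_left h2 (mul_nonneg hb.le hzz)]
  have habs1 : ‖bc μ (k+1) * z ^ (2*(k+1))‖ = bc μ (k+1) * z ^ (2*(k+1)) := by
    rw [Real.norm_eq_abs, abs_of_nonneg]
    have : (0:ℝ) ≤ z^(2*(k+1)) := by rw [pow_mul]; positivity
    positivity
  have habs2 : ‖bc μ k * z ^ (2*k)‖ = bc μ k * z ^ (2*k) := by
    rw [Real.norm_eq_abs, abs_of_nonneg]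
    have : (0:ℝ) ≤ z^(2*k) := by rw [pow_mul]; positivity
    positivity
  rw [habs1, habs2]
  exact key

lemma antitone_expF (μ : ℝ) (hμ : -(1/2) < μ) (N : ℕ) :
    AntitoneOn (fun w => Real.exp (-w) * ∑ k ∈ range N, bc μ k * w^(2*k)) (Set.Ici 0) := by
  have hderiv : ∀ w : ℝ, HasDerivAt (fun w => Real.exp (-w) * ∑ k ∈ range N, bc μ k * w^(2*k))
      (-Real.exp (-w) * (∑ k ∈ range N, bc μ k * w^(2*k))
        + Real.exp (-w) * ∑ k ∈ range N, bc μ k * (((2*k : ℕ) : ℝ) * w^(2*k-1))) w := by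
    intro w
    have he : HasDerivAt (fun w : ℝ => Real.exp (-w)) (-Real.exp (-w)) w := by
      exact ((Real.hasDerivAt_exp (-w)).comp w (hasDerivAt_neg w)).congr_deriv (by ring)
    have hF : HasDerivAt (fun w => ∑ k ∈ range N, bc μ k * w^(2*k))
        (∑ k ∈ range N, bc μ k * (((2*k : ℕ) : ℝ) * w^(2*k-1))) w := by
      apply HasDerivAt.fun_sum
      intro k _
      exact (hasDerivAt_pow (2*k) w).const_mul (bc μ k)
    exact he.mul hF
  apply antitoneOn_of_deriv_nonpos (convex_Ici 0)
  · exact fun w _ => ((hderiv w).continuousAt).continuousWithinAt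
  · intro w _
    exact (hderiv w).differentiableAt.differentiableWithinAt
  · intro w hw
    rw [interior_Ici] at hw
    rw [(hderiv w).deriv]
    have h1 := deriv_le_sum μ hμ w (le_of_lt hw) N
    have he := Real.exp_pos (-w)
    nlinarith

lemma f_ratio (μ : ℝ) (hμ : -(1/2) < μ) (x y : ℝ) (hx : 0 < x) (hxy : x ≤ y) :
    Real.exp (-y) * ∑' k : ℕ, bc μ k * y^(2*k) ≤ Real.exp (-x) * ∑' k : ℕ, bc μ k * x^(2*k) := by
  have hy : 0 < y := lt_of_lt_of_le hx hxy
  have hsy := summable_f μ hμ y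
  have hsx := summable_f μ hμ x
  have hterm : ∀ z : ℝ, 0 < z → ∀ k, 0 ≤ bc μ k * z^(2*k) := by
    intro z hz k
    have := bc_pos μ hμ k
    positivity
  have hN : ∀ N : ℕ, Real.exp (-y) * ∑ k ∈ range N, bc μ k * y^(2*k)
      ≤ Real.exp (-x) * ∑' k : ℕ, bc μ k * x^(2*k) := by
    intro N
    have h1 : Real.exp (-y) * ∑ k ∈ range N, bc μ k * y^(2*k)
        ≤ Real.exp (-x) * ∑ k ∈ range N, bc μ k * x^(2*k) :=
      antitone_expF μ hμ N (Set.mem_Ici.mpr hx.le) (Set.mem_Ici.mpr hy.le) hxy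
    have h2 : ∑ k ∈ range N, bc μ k * x^(2*k) ≤ ∑' k : ℕ, bc μ k * x^(2*k) :=
      Summable.sum_le_tsum (range N) (fun k _ => hterm x hx k) hsx
    calc _ ≤ Real.exp (-x) * ∑ k ∈ range N, bc μ k * x^(2*k) := h1
      _ ≤ _ := by
        apply mul_le_mul_of_nonneg_left h2 (Real.exp_pos _).le
  have hlim : Tendsto (fun N => Real.exp (-y) * ∑ k ∈ range N, bc μ k * y^(2*k)) atTop
      (nhds (Real.exp (-y) * ∑' k : ℕ, bc μ k * y^(2*k))) :=
    (hsy.hasSum.tendsto_sum_nat).const_mul _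
  exact le_of_tendsto hlim (Eventually.of_forall hN)

lemma besselI_eq (μ : ℝ) (z : ℝ) (hz : 0 < z) :
    besselI μ z = (z/2) ^ μ * ∑' k : ℕ, bc μ k * z^(2*k) := by
  unfold besselI
  rw [← tsum_mul_left]
  apply tsum_congr
  intro k
  have hz2 : (0:ℝ) < z/2 := by linarith
  have h1 : (z/2) ^ (μ + 2 * (k:ℝ)) = (z/2)^μ * (z/2)^(2*k : ℕ) := by
    rw [Real.rpow_add hz2]
    congr 1
    rw [← Real.rpow_natCast (z/2) (2*k)]
    push_cast
    ring_nf
  rw [h1]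
  unfold bc
  have h2 : (z/2)^(2*k : ℕ) = z^(2*k) / 4^k := by
    rw [div_pow]
    congr 1
    rw [pow_mul]
    norm_num
  rw [h2]
  have hΓ : Real.Gamma ((k:ℝ) + μ + 1) ≠ 0 ∨ True := Or.inr trivial
  field_simp

lemma f_pos (μ : ℝ) (hμ : -(1/2) < μ) (z : ℝ) (hz : 0 < z) :
    0 < ∑' k : ℕ, bc μ k * z^(2*k) := by
  have h0 : bc μ 0 * z^(2*0) = bc μ 0 := by norm_num
  have := Summable.le_tsum (summable_f μ hμ z) 0 (fun j _ => by
    have := bc_pos μ hμ j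
    positivity)
  rw [h0] at this
  exact lt_of_lt_of_le (bc_pos μ hμ 0) this

theorem besselI_ratio_upper (μ : ℝ) (hμ : -(1/2) < μ) (x y : ℝ) (hx : 0 < x) (hxy : x ≤ y) :
    besselI μ y / besselI μ x ≤ (y / x) ^ μ * Real.exp (y - x) := by
  have hy : 0 < y := lt_of_lt_of_le hx hxy
  rw [besselI_eq μ x hx, besselI_eq μ y hy]
  set fx := ∑' k : ℕ, bc μ k * x^(2*k) with hfx
  set fy := ∑' k : ℕ, bc μ k * y^(2*k) with hfy
  have hfxp : 0 < fx := f_pos μ hμ x hx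
  have hfyp : 0 < fy := f_pos μ hμ y hy
  have hx2 : (0:ℝ) < (x/2)^μ := Real.rpow_pos_of_pos (by linarith) μ
  have hy2 : (0:ℝ) < (y/2)^μ := Real.rpow_pos_of_pos (by linarith) μ
  have hratio : fy ≤ Real.exp (y - x) * fx := by
    have h := f_ratio μ hμ x y hx hxy
    calc fy = Real.exp y * (Real.exp (-y) * fy) := by
          rw [← mul_assoc, ← Real.exp_add]; simp
      _ ≤ Real.exp y * (Real.exp (-x) * fx) :=
          mul_le_mul_of_nonneg_left h (Real.exp_pos y).le
      _ = Real.exp (y - x) * fx := by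
          rw [← mul_assoc, ← Real.exp_add]; ring_nf
  have hdivpow : (y/x) ^ μ = (y/2)^μ / (x/2)^μ := by
    rw [← Real.div_rpow (by linarith : (0:ℝ) ≤ y/2) (by linarith : (0:ℝ) ≤ x/2)]
    congr 1
    field_simp
  rw [hdivpow]
  rw [div_le_iff₀ (by positivity)]
  have expand : (y/2)^μ / (x/2)^μ * Real.exp (y - x) * ((x/2)^μ * fx)
      = (y/2)^μ * (Real.exp (y-x) * fx) := by
    field_simp
  rw [expand]
  apply mul_le_mul_of_nonneg_left hratio hy2.le
end

section
/- Let I_μ be the modified Bessel function of the first kind with μ ≥ 1/2. Then for all 0 < x ≤ y, I_μ(y)/I_μ(x) ≥ (x/y)^μ · e^{y-x}. In particular, for μ ≥ 1/2 and z ≥ 1, I_μ(z) ≥ I_μ(1) · z^{-μ} · e^{z-1}. -/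
namespace BesselRatioAux

open MeasureTheory intervalIntegral Set

/-- even moments of the Poisson kernel weight -/
noncomputable def mmt (p : ℝ) (k : ℕ) : ℝ := ∫ s in (-1:ℝ)..1, s ^ (2*k) * (1 - s^2) ^ p

/-- the Poisson-type integral -/
noncomputable def AA (p z : ℝ) : ℝ := ∫ s in (-1:ℝ)..1, Real.exp (z*s) * (1 - s^2) ^ p

/-- the substituted form, visibly monotone in `z` -/
noncomputable def KK (p z : ℝ) : ℝ := ∫ u in (0:ℝ)..(2*z), Real.exp (-u) * (u^p * (2*z-u)^p)

noncomputable def gam (μ : ℝ) (k : ℕ) : ℝ :=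
  Real.Gamma (μ+1) * (Nat.factorial (2*k)) / (4^k * (Nat.factorial k) * Real.Gamma ((k:ℝ) + μ + 1))

lemma contw {p : ℝ} (hp : 0 ≤ p) : Continuous (fun s : ℝ => (1 - s^2) ^ p) :=
  (Real.continuous_rpow_const hp).comp (by continuity)

lemma intgr {p : ℝ} (hp : 0 ≤ p) (n : ℕ) (a b : ℝ) :
    IntervalIntegrable (fun s : ℝ => s ^ n * (1 - s^2) ^ p) volume a b :=
  ((continuous_pow n).mul (contw hp)).intervalIntegrable a b

lemma mmt_rec {p : ℝ} (hp : 0 ≤ p) (k : ℕ) :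
    (2*(k:ℝ)+2*p+3) * mmt p (k+1) = (2*(k:ℝ)+1) * mmt p k := by
  have h1 : (1:ℝ) ≤ p + 1 := by linarith
  set F : ℝ → ℝ := fun s => s ^ (2*k+1) * (1 - s^2) ^ (p+1) with hF
  set F' : ℝ → ℝ := fun s =>
      (2*(k:ℝ)+1) * s ^ (2*k) * (1-s^2)^(p+1) + s^(2*k+1) * ((p+1) * (1-s^2)^p * (-(2*s))) with hF'
  have hderiv : ∀ s : ℝ, HasDerivAt F (F' s) s := by
    intro s
    have hin : HasDerivAt (fun s : ℝ => 1 - s^2) (-(2*s)) s := by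
      simpa using ((hasDerivAt_pow 2 s).const_sub 1)
    have hrp : HasDerivAt (fun x : ℝ => x ^ (p+1)) ((p+1) * (1-s^2)^(p+1-1)) (1-s^2) :=
      Real.hasDerivAt_rpow_const (Or.inr h1)
    have hcomp : HasDerivAt (fun s : ℝ => (1-s^2)^(p+1)) ((p+1) * (1-s^2)^p * (-(2*s))) s := by
      have := hrp.comp s hin
      simpa [add_sub_cancel_right, mul_assoc, Function.comp_def] using this
    have hpow : HasDerivAt (fun s : ℝ => s ^ (2*k+1)) ((2*(k:ℝ)+1) * s ^ (2*k)) s := by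
      simpa [Nat.cast_ofNat, mul_comm] using (hasDerivAt_pow (2*k+1) s)
    simpa [hF, hF', Pi.mul_def] using hpow.mul hcomp
  have hFcont : Continuous F' := by
    have := contw hp
    have := contw (by linarith : (0:ℝ) ≤ p+1)
    fun_prop
  have hint : ∫ s in (-1:ℝ)..1, F' s = F 1 - F (-1) :=
    integral_eq_sub_of_hasDerivAt (fun s _ => hderiv s) (hFcont.intervalIntegrable _ _)
  have hzero : F 1 - F (-1) = 0 := by
    have : (0:ℝ) ^ (p+1) = 0 := Real.zero_rpow (by positivity)
    simp [hF, this]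
  have hcongr : ∫ s in (-1:ℝ)..1, F' s =
      ∫ s in (-1:ℝ)..1, ((2*(k:ℝ)+1) * (s ^ (2*k) * (1-s^2)^p)
        - (2*(k:ℝ)+2*p+3) * (s ^ (2*(k+1)) * (1-s^2)^p)) := by
    apply integral_congr
    intro s hs
    rw [uIcc_of_le (by norm_num)] at hs
    have hs2 : 0 ≤ 1 - s^2 := by
      have h1 := hs.1; have h2 := hs.2; nlinarith
    have hadd : (1-s^2)^(p+1) = (1-s^2)^p * (1-s^2) := by
      rw [Real.rpow_add' hs2 (by positivity), Real.rpow_one]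
    simp only [hF', hadd]
    ring
  rw [hcongr] at hint
  rw [intervalIntegral.integral_sub ((intgr hp (2*k) _ _).const_mul _)
      ((intgr hp (2*(k+1)) _ _).const_mul _),
    intervalIntegral.integral_const_mul, intervalIntegral.integral_const_mul, hzero] at hint
  have : (2*(k:ℝ)+1) * mmt p k - (2*(k:ℝ)+2*p+3) * mmt p (k+1) = 0 := by
    simpa [mmt] using hint
  linarith

lemma gam_rec {μ : ℝ} (hμ : 1/2 ≤ μ) (k : ℕ) :
    (2*((k:ℝ)+μ+1)) * gam μ (k+1) = (2*(k:ℝ)+1) * gam μ k := by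
  have hg : Real.Gamma (((k+1:ℕ):ℝ) + μ + 1) = ((k:ℝ)+μ+1) * Real.Gamma ((k:ℝ)+μ+1) := by
    push_cast
    rw [show (k:ℝ) + 1 + μ + 1 = ((k:ℝ) + μ + 1) + 1 by ring, Real.Gamma_add_one (by positivity)]
  have hgpos : 0 < Real.Gamma ((k:ℝ)+μ+1) := Real.Gamma_pos_of_pos (by positivity)
  have hfac : (Nat.factorial (2*(k+1)) : ℝ) = (2*(k:ℝ)+2) * ((2*(k:ℝ)+1) * (Nat.factorial (2*k))) := by
    have : 2*(k+1) = (2*k+1) + 1 := by ring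
    rw [this, Nat.factorial_succ, Nat.factorial_succ]
    push_cast; ring
  have hkf : (Nat.factorial (k+1) : ℝ) = ((k:ℝ)+1) * (Nat.factorial k) := by
    rw [Nat.factorial_succ]; push_cast; ring
  have hk4 : (4:ℝ)^(k+1) = 4 * 4^k := by ring
  have hfpos : (0:ℝ) < Nat.factorial k := by positivity
  unfold gam
  rw [hg, hfac, hkf, hk4]
  field_simp
  ring

lemma mmt_closed {μ : ℝ} (hμ : 1/2 ≤ μ) (k : ℕ) :
    mmt (μ - 1/2) k = mmt (μ - 1/2) 0 * gam μ k := by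
  induction k with
  | zero =>
    have : gam μ 0 = 1 := by
      unfold gam
      have : Real.Gamma ((0:ℕ) + μ + 1) = Real.Gamma (μ+1) := by norm_num
      rw [this]
      have := Real.Gamma_pos_of_pos (show (0:ℝ) < μ + 1 by linarith)
      field_simp [Nat.factorial]
    simp [this]
  | succ k ih =>
    have hrec := mmt_rec (show (0:ℝ) ≤ μ - 1/2 by linarith) k
    have h0 : (2*(k:ℝ)+2*(μ-1/2)+3) = 2*((k:ℝ)+μ+1) := by ring
    rw [h0] at hrec
    have hgrec := gam_rec hμ k
    have hpos : (0:ℝ) < 2*((k:ℝ)+μ+1) := by positivity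
    set a := mmt (μ - 1/2) (k+1) with ha
    set b := mmt (μ - 1/2) k with hb
    set c := mmt (μ - 1/2) 0 with hc
    rw [ih] at hrec
    have h2 : (2*((k:ℝ)+μ+1)) * (c * gam μ (k+1)) = (2*((k:ℝ)+μ+1)) * a := by
      rw [hrec, show (2*((k:ℝ)+μ+1)) * (c * gam μ (k+1))
        = c * ((2*((k:ℝ)+μ+1)) * gam μ (k+1)) from by ring, hgrec]
      ring
    have := mul_left_cancel₀ hpos.ne' h2
    linarith

lemma exp_tsum (x : ℝ) : Real.exp x = ∑' n : ℕ, x^n / (Nat.factorial n) := by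
  rw [Real.exp_eq_exp_ℝ, NormedSpace.exp_eq_tsum_div]

lemma Modd {p : ℝ} (n : ℕ) (hn : Odd n) :
    ∫ s in (-1:ℝ)..1, s ^ n * (1 - s^2) ^ p = 0 := by
  set g : ℝ → ℝ := fun s => s ^ n * (1 - s^2) ^ p with hg
  have h1 : ∫ s in (-1:ℝ)..1, g (-s) = ∫ s in (-1:ℝ)..1, g s := by
    simpa using integral_comp_neg (a := (-1:ℝ)) (b := 1) g
  have h2 : ∀ s : ℝ, g (-s) = - g s := by
    intro s; simp [hg, hn.neg_pow]
  rw [funext h2] at h1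
  rw [intervalIntegral.integral_neg] at h1
  linarith

lemma A_series {p : ℝ} (hp : 0 ≤ p) (z : ℝ) :
    AA p z = ∑' k : ℕ, z ^ (2*k) / (Nat.factorial (2*k)) * mmt p k := by
  set f : ℕ → ℝ → ℝ := fun n s => (z*s)^n / (Nat.factorial n) * (1 - s^2) ^ p with hf
  have hcont : ∀ n, Continuous (f n) := fun n =>
    (((continuous_const.mul continuous_id).pow n).div_const _).mul (contw hp)
  have h_int : ∀ n, IntegrableOn (f n) (Ioc (-1:ℝ) 1) volume := fun n =>
    (hcont n).integrableOn_Ioc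
  have hbound : ∀ n, ∫ s in Ioc (-1:ℝ) 1, ‖f n s‖ ≤ 2 * (|z|^n / (Nat.factorial n)) := by
    intro n
    have hmono : ∫ s in Ioc (-1:ℝ) 1, ‖f n s‖ ≤ ∫ _ in Ioc (-1:ℝ) 1, (|z|^n / (Nat.factorial n)) := by
      apply setIntegral_mono_on (h_int n).norm (integrableOn_const (by simp))
        measurableSet_Ioc
      intro s hs
      have hs1 : -1 < s := hs.1
      have hs2 : s ≤ 1 := hs.2
      have hw0 : (0:ℝ) ≤ 1 - s^2 := by nlinarith
      have hw1 : (1 - s^2 : ℝ) ≤ 1 := by nlinarith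
      have habs : |s| ≤ 1 := abs_le.mpr ⟨le_of_lt hs1, hs2⟩
      have : ‖f n s‖ = |z*s|^n / (Nat.factorial n) * (1-s^2)^p := by
        rw [hf]; simp [abs_mul, abs_div, abs_pow, abs_of_nonneg (Real.rpow_nonneg hw0 p),
          Nat.abs_cast]
      rw [this]
      have h1 : |z*s|^n ≤ |z|^n := by
        apply pow_le_pow_left₀ (abs_nonneg _)
        rw [abs_mul]
        calc |z| * |s| ≤ |z| * 1 := by nlinarith [abs_nonneg z]
        _ = |z| := mul_one _
      have h2 : (1-s^2)^p ≤ 1 := Real.rpow_le_one hw0 hw1 hp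
      calc |z*s|^n / (Nat.factorial n) * (1-s^2)^p
          ≤ |z|^n / (Nat.factorial n) * 1 := by
            apply mul_le_mul (by gcongr) h2 (Real.rpow_nonneg hw0 p) (by positivity)
        _ = |z|^n / (Nat.factorial n) := mul_one _
    calc ∫ s in Ioc (-1:ℝ) 1, ‖f n s‖ ≤ _ := hmono
      _ = 2 * (|z|^n / (Nat.factorial n)) := by
          rw [setIntegral_const]
          rw [Real.volume_real_Ioc]
          norm_num
  have hnn : ∀ n, 0 ≤ ∫ s in Ioc (-1:ℝ) 1, ‖f n s‖ := fun n =>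
    integral_nonneg (fun s => norm_nonneg _)
  have hsum : Summable (fun n => ∫ s in Ioc (-1:ℝ) 1, ‖f n s‖) :=
    Summable.of_nonneg_of_le hnn hbound ((Real.summable_pow_div_factorial |z|).mul_left 2)
  have hswap : ∑' n, (∫ s in Ioc (-1:ℝ) 1, f n s) = ∫ s in Ioc (-1:ℝ) 1, (∑' n, f n s) :=
    integral_tsum_of_summable_integral_norm h_int hsum
  have hptw : ∀ s : ℝ, (∑' n, f n s) = Real.exp (z*s) * (1 - s^2) ^ p := by
    intro s
    rw [exp_tsum (z*s), ← tsum_mul_right]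
  have hA : AA p z = ∑' n, (∫ s in Ioc (-1:ℝ) 1, f n s) := by
    rw [AA, integral_of_le (by norm_num : (-1:ℝ) ≤ 1), ← funext hptw, ← hswap]
  set c : ℕ → ℝ := fun n => z^n / (Nat.factorial n) * ∫ s in (-1:ℝ)..1, s ^ n * (1-s^2)^p with hc
  have hceq : ∀ n, (∫ s in Ioc (-1:ℝ) 1, f n s) = c n := by
    intro n
    simp only [hc]
    rw [← integral_of_le (by norm_num : (-1:ℝ) ≤ 1), ← intervalIntegral.integral_const_mul]
    apply integral_congr
    intro s _
    simp only [hf]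
    rw [mul_pow]
    ring
  rw [funext hceq] at hA
  have hsc : Summable c := by
    apply Summable.of_norm
    apply Summable.of_nonneg_of_le (fun n => norm_nonneg _) _ hsum
    intro n
    rw [← hceq n]
    exact norm_integral_le_integral_norm _
  have heo := tsum_even_add_odd (hsc.comp_injective (fun a b h => by omega))
    (hsc.comp_injective (fun a b h => by omega))
  have hodd : ∀ k : ℕ, c (2*k+1) = 0 := by
    intro k
    rw [hc]
    simp [Modd (2*k+1) ⟨k, by ring⟩]
  have heven : ∀ k : ℕ, c (2*k) = z ^ (2*k) / (Nat.factorial (2*k)) * mmt p k := by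
    intro k; rfl
  rw [hA, ← heo]
  simp only [Function.comp, hodd, heven, tsum_zero, add_zero]

lemma mmt0_pos {p : ℝ} (hp : 0 ≤ p) : 0 < mmt p 0 := by
  apply intervalIntegral_pos_of_pos_on
    (((continuous_pow _).mul (contw hp)).intervalIntegrable _ _)
  · intro s hs
    have h1 : -1 < s := hs.1
    have h2 : s < 1 := hs.2
    have : (0:ℝ) < 1 - s^2 := by nlinarith
    have := Real.rpow_pos_of_pos this p
    simpa using this
  · norm_num

lemma AA_pos {p : ℝ} (hp : 0 ≤ p) (z : ℝ) : 0 < AA p z := by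
  apply intervalIntegral_pos_of_pos_on
    (((Real.continuous_exp.comp (continuous_const.mul continuous_id)).mul
      (contw hp)).intervalIntegrable _ _)
  · intro s hs
    have h1 : -1 < s := hs.1
    have h2 : s < 1 := hs.2
    have h3 : (0:ℝ) < 1 - s^2 := by nlinarith
    exact mul_pos (Real.exp_pos _) (Real.rpow_pos_of_pos h3 p)
  · norm_num

lemma besselI_rep {μ : ℝ} (hμ : 1/2 ≤ μ) {z : ℝ} (hz : 0 < z) :
    besselI μ z = (z/2) ^ μ * (AA (μ-1/2) z / (mmt (μ-1/2) 0 * Real.Gamma (μ+1))) := by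
  have hp : (0:ℝ) ≤ μ - 1/2 := by linarith
  have hm0 := mmt0_pos hp
  have hΓ : 0 < Real.Gamma (μ+1) := Real.Gamma_pos_of_pos (by linarith)
  have hz2 : 0 < z/2 := by linarith
  have hterm : ∀ k : ℕ, (z / 2) ^ (μ + 2 * (k : ℝ)) / ((Nat.factorial k : ℝ) * Real.Gamma ((k : ℝ) + μ + 1))
      = (z/2)^μ * (z ^ (2*k) / (4^k * (Nat.factorial k : ℝ) * Real.Gamma ((k:ℝ) + μ + 1))) := by
    intro k
    rw [Real.rpow_add hz2, show (2 * (k:ℝ)) = ((2*k : ℕ) : ℝ) by push_cast; ring,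
      Real.rpow_natCast, div_pow, show ((2:ℝ))^(2*k) = 4^k by rw [pow_mul]; norm_num]
    have h1 : (0:ℝ) < (4:ℝ)^k := by positivity
    have h2 : (0:ℝ) < (Nat.factorial k : ℝ) := by positivity
    have h3 : 0 < Real.Gamma ((k:ℝ) + μ + 1) := Real.Gamma_pos_of_pos (by positivity)
    field_simp
  have hterm2 : ∀ k : ℕ, z ^ (2*k) / (Nat.factorial (2*k)) * mmt (μ-1/2) k
      = (mmt (μ-1/2) 0 * Real.Gamma (μ+1)) * (z ^ (2*k) / (4^k * (Nat.factorial k : ℝ) * Real.Gamma ((k:ℝ) + μ + 1))) := by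
    intro k
    rw [mmt_closed hμ k, gam]
    have h1 : (0:ℝ) < (4:ℝ)^k := by positivity
    have h2 : (0:ℝ) < (Nat.factorial k : ℝ) := by positivity
    have h3 : 0 < Real.Gamma ((k:ℝ) + μ + 1) := Real.Gamma_pos_of_pos (by positivity)
    have h4 : (0:ℝ) < (Nat.factorial (2*k) : ℝ) := by positivity
    field_simp
  rw [besselI, funext hterm, tsum_mul_left]
  congr 1
  rw [A_series hp z, funext hterm2, tsum_mul_left] at *
  rw [eq_div_iff (by positivity)]
  ring

lemma contK {p : ℝ} (hp : 0 ≤ p) (c : ℝ) :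
    Continuous (fun u : ℝ => Real.exp (-u) * (u^p * (c-u)^p)) := by
  apply (Real.continuous_exp.comp continuous_neg).mul
  exact (Real.continuous_rpow_const hp).mul
    ((Real.continuous_rpow_const hp).comp (continuous_const.sub continuous_id))

lemma AK {p : ℝ} (hp : 0 ≤ p) {z : ℝ} (hz : 0 < z) :
    KK p z = z^(2*p+1) * (Real.exp (-z) * AA p z) := by
  set h : ℝ → ℝ := fun u => Real.exp (-u) * (u^p * (2*z-u)^p) with hh
  have e1 : ∫ s in (-1:ℝ)..1, (fun t => h (z - t)) (z*s)
      = z⁻¹ • ∫ t in z*(-1)..z*1, h (z - t) :=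
    integral_comp_mul_left (fun t => h (z - t)) hz.ne'
  have e2 : ∫ t in (-z)..z, h (z - t) = ∫ x in (z - z)..(z - -z), h x :=
    integral_comp_sub_left h z
  have e3 : KK p z = z * ∫ s in (-1:ℝ)..1, h (z - z*s) := by
    rw [show ∫ s in (-1:ℝ)..1, h (z - z*s) = ∫ s in (-1:ℝ)..1, (fun t => h (z - t)) (z*s) from rfl,
      e1]
    rw [show z*(-1) = -z by ring, show z*1 = z by ring, e2]
    rw [show z - z = 0 by ring, show z - -z = 2*z by ring]
    rw [smul_eq_mul]
    rw [show KK p z = ∫ x in (0:ℝ)..(2*z), h x from rfl]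
    field_simp
  have e4 : ∫ s in (-1:ℝ)..1, h (z - z*s)
      = ∫ s in (-1:ℝ)..1, (z^p * z^p * Real.exp (-z)) * (Real.exp (z*s) * (1-s^2)^p) := by
    apply integral_congr
    intro s hs
    rw [uIcc_of_le (by norm_num)] at hs
    have h1 : (0:ℝ) ≤ 1 - s := by linarith [hs.2]
    have h2 : (0:ℝ) ≤ 1 + s := by linarith [hs.1]
    have hzz : (0:ℝ) ≤ z := hz.le
    simp only [hh]
    rw [show z - z*s = z*(1-s) by ring, show 2*z - z*(1-s) = z*(1+s) by ring,
      Real.mul_rpow hzz h1, Real.mul_rpow hzz h2, show -(z*(1-s)) = z*s - z by ring,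
      Real.exp_sub]
    have key : (1-s)^p * (1+s)^p = (1-s^2)^p := by
      rw [← Real.mul_rpow h1 h2, show (1-s)*(1+s) = 1 - s^2 by ring]
    rw [← key, Real.exp_neg, div_eq_mul_inv]
    ring
  rw [e3, e4, intervalIntegral.integral_const_mul]
  have hzp : z^(2*p+1) = z^p * z^p * z := by
    rw [show 2*p+1 = p + (p+1) by ring, Real.rpow_add hz, Real.rpow_add hz, Real.rpow_one]
    ring
  rw [hzp, ← AA]
  ring

lemma KK_mono {p : ℝ} (hp : 0 ≤ p) {x y : ℝ} (hx : 0 < x) (hxy : x ≤ y) :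
    KK p x ≤ KK p y := by
  have h2x : (0:ℝ) ≤ 2*x := by linarith
  have step1 : KK p x ≤ ∫ u in (0:ℝ)..(2*x), Real.exp (-u) * (u^p * (2*y-u)^p) := by
    apply integral_mono_on h2x ((contK hp _).intervalIntegrable _ _)
      ((contK hp _).intervalIntegrable _ _)
    intro u hu
    have hu1 : 0 ≤ u := hu.1
    have hu2 : u ≤ 2*x := hu.2
    have : (2*x - u)^p ≤ (2*y - u)^p :=
      Real.rpow_le_rpow (by linarith) (by linarith) hp
    have hup : 0 ≤ u^p := Real.rpow_nonneg hu1 p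
    exact mul_le_mul_of_nonneg_left (mul_le_mul_of_nonneg_left this hup) (Real.exp_pos _).le
  have step2 : ∫ u in (0:ℝ)..(2*x), Real.exp (-u) * (u^p * (2*y-u)^p) ≤ KK p y := by
    apply integral_mono_interval le_rfl h2x (by linarith)
    · filter_upwards [ae_restrict_mem measurableSet_Ioc] with u hu
      simp only [Pi.zero_apply]
      have hu1 : 0 < u := hu.1
      have hu2 : u ≤ 2*y := hu.2
      have := Real.rpow_nonneg hu1.le p
      have := Real.rpow_nonneg (show (0:ℝ) ≤ 2*y - u by linarith) p
      positivity
    · exact (contK hp _).intervalIntegrable _ _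
  linarith

end BesselRatioAux

open BesselRatioAux in
theorem besselI_ratio_lower (μ : ℝ) (hμ : 1/2 ≤ μ) :
    (∀ x y : ℝ, 0 < x → x ≤ y →
      (x / y) ^ μ * Real.exp (y - x) ≤ besselI μ y / besselI μ x) ∧
    (∀ z : ℝ, 1 ≤ z → besselI μ 1 * z ^ (-μ) * Real.exp (z - 1) ≤ besselI μ z) := by
  have hp : (0:ℝ) ≤ μ - 1/2 := by linarith
  set p := μ - 1/2 with hpdef
  have hC : 0 < mmt p 0 * Real.Gamma (μ+1) :=
    mul_pos (mmt0_pos hp) (Real.Gamma_pos_of_pos (by linarith))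
  set C := mmt p 0 * Real.Gamma (μ+1) with hCdef
  have h2p1 : 2*p+1 = 2*μ := by rw [hpdef]; ring
  -- besselI in KK form
  have hrep : ∀ z : ℝ, 0 < z →
      besselI μ z = ((z/2)^μ / z^(2*μ)) * Real.exp z * KK p z / C := by
    intro z hz
    have hAK := AK hp hz
    rw [h2p1] at hAK
    have hzμ : (0:ℝ) < z^(2*μ) := Real.rpow_pos_of_pos hz _
    have hAA : AA p z = Real.exp z * KK p z / z^(2*μ) := by
      rw [hAK, Real.exp_neg]
      field_simp
    rw [besselI_rep hμ hz, hAA, ← hCdef]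
    field_simp
  have hKpos : ∀ z : ℝ, 0 < z → 0 < KK p z := by
    intro z hz
    rw [AK hp hz]
    have := AA_pos hp z
    have := Real.exp_pos (-z)
    have : (0:ℝ) < z^(2*p+1) := Real.rpow_pos_of_pos hz _
    positivity
  have hIpos : ∀ z : ℝ, 0 < z → 0 < besselI μ z := by
    intro z hz
    rw [hrep z hz]
    have h1 : (0:ℝ) < (z/2)^μ := Real.rpow_pos_of_pos (by linarith) _
    have h2 : (0:ℝ) < z^(2*μ) := Real.rpow_pos_of_pos hz _
    have h3 := hKpos z hz
    have h4 := Real.exp_pos z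
    positivity
  -- coefficient computation
  have hsq : ∀ z : ℝ, 0 < z → z^(2*μ) = (z^2)^μ := by
    intro z hz
    rw [← Real.rpow_natCast z 2, ← Real.rpow_mul hz.le]
    norm_num
  have hcoef : ∀ z : ℝ, 0 < z → (z/2)^μ / z^(2*μ) = (1/(2*z))^μ := by
    intro z hz
    rw [hsq z hz, ← Real.div_rpow (by positivity) (sq_nonneg z)]
    congr 1
    field_simp
  have main : ∀ x y : ℝ, 0 < x → x ≤ y →
      (x / y) ^ μ * Real.exp (y - x) ≤ besselI μ y / besselI μ x := by
    intro x y hx hxy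
    have hy : 0 < y := lt_of_lt_of_le hx hxy
    rw [le_div_iff₀ (hIpos x hx)]
    rw [hrep x hx, hrep y hy, hcoef x hx, hcoef y hy]
    have hexp : Real.exp (y-x) * Real.exp x = Real.exp y := by
      rw [← Real.exp_add]; norm_num
    have hcomb : (x/y)^μ * (1/(2*x))^μ = (1/(2*y))^μ := by
      rw [← Real.mul_rpow (by positivity) (by positivity)]
      congr 1
      field_simp
    calc (x/y)^μ * Real.exp (y-x) * ((1/(2*x))^μ * Real.exp x * KK p x / C)
        = ((x/y)^μ * (1/(2*x))^μ) * (Real.exp (y-x) * Real.exp x) * KK p x / C := by ring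
      _ = (1/(2*y))^μ * Real.exp y * KK p x / C := by rw [hcomb, hexp]
      _ ≤ (1/(2*y))^μ * Real.exp y * KK p y / C := by
          have h1 : (0:ℝ) < (1/(2*y))^μ := Real.rpow_pos_of_pos (by positivity) _
          gcongr
          exact KK_mono hp hx hxy
  refine ⟨main, ?_⟩
  intro z hz
  have hz0 : (0:ℝ) < z := by linarith
  have h := main 1 z one_pos hz
  rw [le_div_iff₀ (hIpos 1 one_pos)] at h
  have hrw : (1/z)^μ = z^(-μ) := by
    rw [Real.rpow_neg hz0.le, one_div, Real.inv_rpow hz0.le]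
  calc besselI μ 1 * z^(-μ) * Real.exp (z-1)
      = (1/z)^μ * Real.exp (z-1) * besselI μ 1 := by rw [hrw]; ring
    _ ≤ besselI μ z := h
end
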